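/- arXiv:1704.04480 — 4 statements merged into one kernel-verified Lean document; each statement's English description precedes it below -/
import Mathlib

section
/- Let A₀, …, A_{n-1}, A_n be pairwise disjoint infinite subsets of a set U, and let M be the collection of subsets A ⊆ A₀ ∪ ⋯ ∪ A_n such that A ∩ A_i is finite or cofinite in A_i for each i < n, and A ∩ A_n is finite. Then M is closed under union, intersection, and relative complement, contains all singletons of its members' elements, and ordered by inclusion forms an unbounded atomic relatively complemented distributive lattice. -/
/-- The lattice `M` built from pairwise disjoint infinite sets `A 0, …, A n`:
closed under union, intersection and difference, contains singletons of its members'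
elements, is unbounded and atomic. -/
theorem stmt3 {U : Type*} (n : ℕ) (A : Fin (n + 1) → Set U)
    (hdisj : Pairwise (Function.onFun Disjoint A))
    (hinf : ∀ i, (A i).Infinite)
    (M : Set (Set U))
    (hM : M = {s | s ⊆ ⋃ i, A i ∧
      (∀ i : Fin (n + 1), (i : ℕ) < n → (s ∩ A i).Finite ∨ (A i \ s).Finite) ∧
      (s ∩ A (Fin.last n)).Finite}) :
    (∀ s ∈ M, ∀ t ∈ M, s ∪ t ∈ M) ∧
    (∀ s ∈ M, ∀ t ∈ M, s ∩ t ∈ M) ∧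
    (∀ s ∈ M, ∀ t ∈ M, s \ t ∈ M) ∧
    (∀ s ∈ M, ∀ x ∈ s, ({x} : Set U) ∈ M) ∧
    (¬ ∃ t ∈ M, ∀ s ∈ M, s ⊆ t) ∧
    (∀ s ∈ M, s.Nonempty → ∃ x ∈ s, ({x} : Set U) ∈ M ∧ ({x} : Set U) ⊆ s) := by
  subst hM
  have hsing : ∀ x ∈ ⋃ i, A i, ({x} : Set U) ∈
      {s | s ⊆ ⋃ i, A i ∧
        (∀ i : Fin (n + 1), (i : ℕ) < n → (s ∩ A i).Finite ∨ (A i \ s).Finite) ∧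
        (s ∩ A (Fin.last n)).Finite} := by
    intro x hx
    refine ⟨Set.singleton_subset_iff.mpr hx, fun i _ => Or.inl ?_, ?_⟩
    · exact (Set.finite_singleton x).inter_of_left _
    · exact (Set.finite_singleton x).inter_of_left _
  refine ⟨?_, ?_, ?_, ?_, ?_, ?_⟩
  · rintro s ⟨hs1, hs2, hs3⟩ t ⟨ht1, ht2, ht3⟩
    refine ⟨Set.union_subset hs1 ht1, fun i hi => ?_, ?_⟩
    · rcases hs2 i hi with h | h
      · rcases ht2 i hi with h' | h'
        · exact Or.inl (by rw [Set.union_inter_distrib_right]; exact h.union h')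
        · exact Or.inr (h'.subset (fun y hy => ⟨hy.1, fun hy' => hy.2 (Or.inr hy')⟩))
      · exact Or.inr (h.subset (fun y hy => ⟨hy.1, fun hy' => hy.2 (Or.inl hy')⟩))
    · rw [Set.union_inter_distrib_right]; exact hs3.union ht3
  · rintro s ⟨hs1, hs2, hs3⟩ t ⟨ht1, ht2, ht3⟩
    refine ⟨(Set.inter_subset_left).trans hs1, fun i hi => ?_, ?_⟩
    · rcases hs2 i hi with h | h
      · exact Or.inl (h.subset (by intro y hy; exact ⟨hy.1.1, hy.2⟩))
      · rcases ht2 i hi with h' | h'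
        · exact Or.inl (h'.subset (by intro y hy; exact ⟨hy.1.2, hy.2⟩))
        · exact Or.inr ((h.union h').subset (by
            intro y hy
            by_cases hys : y ∈ s
            · exact Or.inr ⟨hy.1, fun hyt => hy.2 ⟨hys, hyt⟩⟩
            · exact Or.inl ⟨hy.1, hys⟩))
    · exact hs3.subset (by intro y hy; exact ⟨hy.1.1, hy.2⟩)
  · rintro s ⟨hs1, hs2, hs3⟩ t ⟨ht1, ht2, ht3⟩
    refine ⟨(Set.diff_subset).trans hs1, fun i hi => ?_, ?_⟩
    · rcases hs2 i hi with h | h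
      · exact Or.inl (h.subset (by intro y hy; exact ⟨hy.1.1, hy.2⟩))
      · rcases ht2 i hi with h' | h'
        · -- t ∩ A i finite, A i \ s finite ⇒ s\t ∩ A i cofinite in A i
          exact Or.inr ((h.union h').subset (by
            intro y hy
            by_cases hys : y ∈ s
            · have hyt : y ∈ t := by
                by_contra hyt; exact hy.2 ⟨hys, hyt⟩
              exact Or.inr ⟨hyt, hy.1⟩
            · exact Or.inl ⟨hy.1, hys⟩))
        · -- A i \ t finite ⇒ s\t ∩ A i ⊆ A i \ t finite
          exact Or.inl (h'.subset (by intro y hy; exact ⟨hy.2, hy.1.2⟩))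
    · exact hs3.subset (by intro y hy; exact ⟨hy.1.1, hy.2⟩)
  · rintro s ⟨hs1, _, _⟩ x hx
    exact hsing x (hs1 hx)
  · rintro ⟨t, ⟨ht1, ht2, ht3⟩, htop⟩
    obtain ⟨x, hxA, hxt⟩ : ∃ x ∈ A (Fin.last n), x ∉ t := by
      have := ((hinf (Fin.last n)).diff ht3)
      obtain ⟨x, hx⟩ := this.nonempty
      exact ⟨x, hx.1, fun hxt => hx.2 ⟨hxt, hx.1⟩⟩
    have hxm := hsing x (Set.mem_iUnion.mpr ⟨_, hxA⟩)
    exact hxt (htop _ hxm rfl)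
  · rintro s ⟨hs1, _, _⟩ ⟨x, hx⟩
    exact ⟨x, hx, hsing x (hs1 hx), Set.singleton_subset_iff.mpr hx⟩
end

section
/- With M as in the construction from disjoint infinite sets A₀, …, A_{n-1}, A_n (where elements meet each A_i for i < n finitely or cofinitely and meet A_n finitely): M contains a family of n pairwise disjoint infinite elements, but every family of pairwise disjoint infinite elements of M has size at most n. -/
open Set Classical in
/-- The lattice `M` built from pairwise disjoint infinite sets `A 0, …, A n` contains a
family of `n` pairwise disjoint infinite elements, but no family of more than `n`
pairwise disjoint infinite elements. -/
theorem stmt4 {U : Type*} (n : ℕ) (A : Fin (n + 1) → Set U)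
    (hdisj : Pairwise (Function.onFun Disjoint A))
    (hinf : ∀ i, (A i).Infinite)
    (M : Set (Set U))
    (hM : M = {s | s ⊆ ⋃ i, A i ∧
      (∀ i : Fin (n + 1), (i : ℕ) < n → (s ∩ A i).Finite ∨ (A i \ s).Finite) ∧
      (s ∩ A (Fin.last n)).Finite}) :
    (∃ f : Fin n → Set U, Function.Injective f ∧
      (∀ i, f i ∈ M ∧ (f i).Infinite) ∧ Pairwise (Function.onFun Disjoint f)) ∧
    (∀ F : Finset (Set U), (∀ s ∈ F, s ∈ M ∧ s.Infinite) →
      (F : Set (Set U)).Pairwise Disjoint → F.card ≤ n) := by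
  subst hM
  constructor
  · refine ⟨fun i => A i.castSucc, ?_, ?_, ?_⟩
    · intro i j hij
      by_contra hne
      have h := hdisj ((Fin.castSucc_injective n).ne hne)
      have hij' : A i.castSucc = A j.castSucc := hij
      rw [Function.onFun, hij', disjoint_self] at h
      exact (hinf j.castSucc) (h ▸ Set.finite_empty)
    · intro i
      refine ⟨⟨subset_iUnion A i.castSucc, ?_, ?_⟩, hinf _⟩
      · intro j hj
        by_cases h : j = i.castSucc
        · subst h; right; simp
        · left
          have hd : Disjoint (A i.castSucc) (A j) := hdisj (fun e => h e.symm)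
          rw [Set.disjoint_iff_inter_eq_empty.mp hd]
          exact finite_empty
      · have hd : Disjoint (A i.castSucc) (A (Fin.last n)) :=
          hdisj (Fin.ne_of_lt (Fin.castSucc_lt_last i))
        rw [Set.disjoint_iff_inter_eq_empty.mp hd]
        exact finite_empty
    · intro i j hij
      exact hdisj ((Fin.castSucc_injective n).ne hij)
  · intro F hF hpair
    have key : ∀ s ∈ F, ∃ i : Fin (n + 1), (i : ℕ) < n ∧ (A i \ s).Finite := by
      intro s hs
      obtain ⟨⟨hsub, hfin, hlast⟩, hsinf⟩ := hF s hs
      have hstep : ∃ i, (s ∩ A i).Infinite := by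
        by_contra h
        push_neg at h
        have : s.Finite := by
          have : s ⊆ ⋃ i, s ∩ A i := by
            intro x hx
            obtain ⟨_, ⟨i, rfl⟩, hxi⟩ := hsub hx
            exact mem_iUnion.mpr ⟨i, hx, hxi⟩
          exact (Set.finite_iUnion h).subset this
        exact hsinf this
      obtain ⟨i, hi⟩ := hstep
      have hne : i ≠ Fin.last n := fun e => hi (e ▸ hlast)
      have hlt : (i : ℕ) < n := Fin.val_lt_last hne
      refine ⟨i, hlt, ?_⟩
      rcases hfin i hlt with h | h
      · exact absurd h hi
      · exact h
    set f : Set U → Fin (n + 1) := fun s =>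
      if h : ∃ i : Fin (n + 1), (i : ℕ) < n ∧ (A i \ s).Finite then h.choose else Fin.last n
      with hfdef
    have hf : ∀ s ∈ F, (f s : ℕ) < n ∧ (A (f s) \ s).Finite := by
      intro s hs
      have h := key s hs
      simp only [hfdef, dif_pos h]
      exact h.choose_spec
    have hmaps : ∀ s ∈ F, f s ∈ (Finset.univ.erase (Fin.last n)) := by
      intro s hs
      refine Finset.mem_erase.mpr ⟨?_, Finset.mem_univ _⟩
      intro e
      have := (hf s hs).1
      rw [e] at this
      simp at this
    have hinj : Set.InjOn f F := by
      intro s hs t ht hst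
      by_contra hne
      have hd := hpair hs ht hne
      have h1 := (hf s hs).2
      have h2 := (hf t ht).2
      rw [hst] at h1
      have hsub : A (f t) ⊆ (A (f t) \ s) ∪ (A (f t) \ t) := by
        intro x hx
        by_cases hxs : x ∈ s
        · by_cases hxt : x ∈ t
          · exact (Set.disjoint_left.mp hd hxs hxt).elim
          · exact Or.inr ⟨hx, hxt⟩
        · exact Or.inl ⟨hx, hxs⟩
      exact hinf (f t) ((h1.union h2).subset hsub)
    calc F.card ≤ (Finset.univ.erase (Fin.last n)).card :=
          Finset.card_le_card_of_injOn f hmaps hinj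
      _ = n := by
          rw [Finset.card_erase_of_mem (Finset.mem_univ _), Finset.card_univ, Fintype.card_fin]; omega
end

section
/- Let L be a countable atomic generalized Boolean algebra with no top element in which (i) every infinite element splits into two disjoint infinite elements and (ii) every element has an infinite element disjoint from it. Let L' be another structure with the same properties. Then any finite partial isomorphism between L and L' that preserves, for each cell of the Venn diagram of its domain, the cardinality of the set of atoms in that cell (as a specific natural number or both infinite), extends to an isomorphism L ≅ L'. -/
/-- An element of a generalized Boolean algebra is *infinite* if it is not the join of
finitely many atoms. -/
def InfiniteElt {α : Type*} [GeneralizedBooleanAlgebra α] (u : α) : Prop :=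
  ¬ ∃ F : Finset α, (∀ a ∈ F, IsAtom a) ∧ F.sup id = u

/-- `x` and `y` have the same number of atoms below them: either both sets of atoms are
infinite, or both are finite of the same size. -/
def SameAtomCount {α β : Type*} [GeneralizedBooleanAlgebra α] [GeneralizedBooleanAlgebra β]
    (x : α) (y : β) : Prop :=
  ({a : α | IsAtom a ∧ a ≤ x}.Finite ↔ {b : β | IsAtom b ∧ b ≤ y}.Finite) ∧
  {a : α | IsAtom a ∧ a ≤ x}.ncard = {b : β | IsAtom b ∧ b ≤ y}.ncard

namespace BF

open Classical

variable {γ : Type*} [GeneralizedBooleanAlgebra γ]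
variable {δ : Type*} [GeneralizedBooleanAlgebra δ]

/-- The set of atoms below `x`. -/
def aB (x : γ) : Set γ := {a | IsAtom a ∧ a ≤ x}

lemma sac_def {x : γ} {y : δ} :
    SameAtomCount x y ↔ (((aB x).Finite ↔ (aB y).Finite) ∧ (aB x).ncard = (aB y).ncard) :=
  Iff.rfl

lemma sac_symm {x : γ} {y : δ} (h : SameAtomCount x y) : SameAtomCount y x :=
  ⟨h.1.symm, h.2.symm⟩

lemma atom_le_or_disj {a : γ} (ha : IsAtom a) (x : γ) : a ≤ x ∨ a ⊓ x = ⊥ := by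
  rcases eq_or_lt_of_le (inf_le_left : a ⊓ x ≤ a) with h | h
  · left; conv_lhs => rw [← h]
    exact inf_le_right
  · right; exact ha.2 _ h

lemma atom_le_sup {a x y : γ} (ha : IsAtom a) (h : a ≤ x ⊔ y) : a ≤ x ∨ a ≤ y := by
  rcases atom_le_or_disj ha x with h1 | h1
  · exact Or.inl h1
  rcases atom_le_or_disj ha y with h2 | h2
  · exact Or.inr h2
  exfalso
  have : a = a ⊓ (x ⊔ y) := (inf_eq_left.mpr h).symm
  rw [inf_sup_left, h1, h2, sup_idem] at this
  exact ha.1 this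

lemma atom_le_atom {a b : γ} (ha : IsAtom a) (hb : IsAtom b) (h : a ≤ b) : a = b := by
  rcases eq_or_lt_of_le h with h | h
  · exact h
  · exact absurd (hb.2 _ h) ha.1

@[simp] lemma aB_bot : aB (⊥ : γ) = ∅ := by
  ext a; simp only [aB, Set.mem_setOf_eq, Set.mem_empty_iff_false, iff_false, not_and, le_bot_iff]
  exact fun ha h => ha.1 h

lemma aB_sup (x y : γ) : aB (x ⊔ y) = aB x ∪ aB y := by
  ext a
  simp only [aB, Set.mem_setOf_eq, Set.mem_union]
  constructor
  · rintro ⟨ha, h⟩; rcases atom_le_sup ha h with h | h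
    · exact Or.inl ⟨ha, h⟩
    · exact Or.inr ⟨ha, h⟩
  · rintro (⟨ha, h⟩ | ⟨ha, h⟩)
    · exact ⟨ha, h.trans le_sup_left⟩
    · exact ⟨ha, h.trans le_sup_right⟩

lemma aB_inf (x y : γ) : aB (x ⊓ y) = aB x ∩ aB y := by
  ext a
  simp only [aB, Set.mem_setOf_eq, Set.mem_inter_iff, le_inf_iff]
  tauto

lemma aB_sdiff (x y : γ) : aB (x \ y) = aB x \ aB y := by
  ext a
  simp only [aB, Set.mem_setOf_eq, Set.mem_diff, le_sdiff]
  constructor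
  · rintro ⟨ha, h, hd⟩
    exact ⟨⟨ha, h⟩, fun h' => ha.1 (le_bot_iff.mp (hd le_rfl h'.2))⟩
  · rintro ⟨⟨ha, h⟩, h2⟩
    refine ⟨ha, h, ?_⟩
    rcases atom_le_or_disj ha y with hy | hy
    · exact absurd ⟨ha, hy⟩ h2
    · exact disjoint_iff.mpr hy

lemma aB_mono {x y : γ} (h : x ≤ y) : aB x ⊆ aB y := fun a ⟨ha, hax⟩ => ⟨ha, hax.trans h⟩

lemma le_iff_aB [IsAtomic γ] {x y : γ} : x ≤ y ↔ aB x ⊆ aB y := by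
  constructor
  · exact aB_mono
  · intro h
    by_contra hxy
    have hne : x \ y ≠ ⊥ := fun hb => hxy (sdiff_eq_bot_iff.mp hb)
    rcases (eq_bot_or_exists_atom_le (x \ y)) with hb | ⟨a, ha, hale⟩
    · exact hne hb
    have : a ∈ aB (x \ y) := ⟨ha, hale⟩
    rw [aB_sdiff] at this
    exact this.2 (h ⟨ha, hale.trans sdiff_le⟩)

lemma eq_iff_aB [IsAtomic γ] {x y : γ} : x = y ↔ aB x = aB y := by
  constructor
  · rintro rfl; rfl
  · intro h; exact le_antisymm (le_iff_aB.mpr h.le) (le_iff_aB.mpr h.ge)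

lemma eq_bot_iff_aB [IsAtomic γ] {x : γ} : x = ⊥ ↔ aB x = ∅ := by
  rw [eq_iff_aB, aB_bot]

lemma aB_finsup {ι : Type*} (s : Finset ι) (g : ι → γ) :
    aB (s.sup g) = ⋃ i ∈ s, aB (g i) := by
  induction s using Finset.induction_on with
  | empty => simp
  | insert a s h ih =>
      rw [Finset.sup_insert, aB_sup, ih]
      simp [Set.biUnion_insert]

lemma aB_sup_atoms (Q : Finset γ) (h : ∀ b ∈ Q, IsAtom b) : aB (Q.sup id) = ↑Q := by
  ext a
  simp only [aB, Set.mem_setOf_eq, Finset.mem_coe]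
  constructor
  · rintro ⟨ha, hle⟩
    have : a ∈ aB (Q.sup id) := ⟨ha, hle⟩
    rw [aB_finsup] at this
    simp only [Set.mem_iUnion] at this
    obtain ⟨b, hb, ⟨ha', hab⟩⟩ := this
    rwa [atom_le_atom ha (h b hb) hab]
  · intro haQ
    exact ⟨h a haQ, Finset.le_sup (f := id) haQ⟩

lemma infiniteElt_iff [IsAtomic γ] {x : γ} : InfiniteElt x ↔ (aB x).Infinite := by
  constructor
  · intro h
    by_contra hni
    rw [Set.not_infinite] at hni
    apply h
    refine ⟨hni.toFinset, fun a ha => ?_, ?_⟩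
    · rw [Set.Finite.mem_toFinset] at ha; exact ha.1
    · have hle : hni.toFinset.sup id ≤ x := by
        apply Finset.sup_le
        intro a ha
        rw [Set.Finite.mem_toFinset] at ha
        exact ha.2
      refine le_antisymm hle ?_
      by_contra hxs
      have hne : x \ hni.toFinset.sup id ≠ ⊥ := fun hb => hxs (sdiff_eq_bot_iff.mp hb)
      rcases eq_bot_or_exists_atom_le (x \ hni.toFinset.sup id) with hb | ⟨a, ha, hale⟩
      · exact hne hb
      have hmem : a ∈ aB (x \ hni.toFinset.sup id) := ⟨ha, hale⟩
      rw [aB_sdiff] at hmem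
      exact hmem.2 ⟨ha, Finset.le_sup (f := id) (by
        rw [Set.Finite.mem_toFinset]; exact ⟨ha, hale.trans sdiff_le⟩)⟩
  · rintro hinf ⟨F, hF, rfl⟩
    rw [aB_sup_atoms F hF] at hinf
    exact hinf F.finite_toSet

lemma sac_bot_bot : SameAtomCount (⊥ : γ) (⊥ : δ) := by
  rw [sac_def]; simp

lemma sac_bot_right [IsAtomic δ] {x : γ} {y : δ} (h : SameAtomCount x y) (hx : x = ⊥) :
    y = ⊥ := by
  rw [sac_def] at h
  subst hx
  rw [aB_bot] at h
  rw [eq_bot_iff_aB]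
  have hfin : (aB y).Finite := h.1.mp (Set.finite_empty)
  have : (aB y).ncard = 0 := h.2.symm.trans (by simp)
  exact (Set.ncard_eq_zero hfin).mp this

lemma sac_of_aB_infinite {x : γ} {y : δ} (hx : (aB x).Infinite) (hy : (aB y).Infinite) :
    SameAtomCount x y := by
  rw [sac_def]
  refine ⟨?_, ?_⟩
  · constructor <;> intro h
    · exact absurd h (fun hf => hx hf)
    · exact absurd h (fun hf => hy hf)
  · rw [hx.ncard, hy.ncard]

lemma sac_sup {x x' : γ} {y y' : δ} (hxd : Disjoint x x') (hyd : Disjoint y y')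
    (h : SameAtomCount x y) (h' : SameAtomCount x' y') :
    SameAtomCount (x ⊔ x') (y ⊔ y') := by
  rw [sac_def] at h h' ⊢
  rw [aB_sup, aB_sup]
  have hdx : Disjoint (aB x) (aB x') := by
    rw [Set.disjoint_iff_inter_eq_empty, ← aB_inf, disjoint_iff.mp hxd, aB_bot]
  have hdy : Disjoint (aB y) (aB y') := by
    rw [Set.disjoint_iff_inter_eq_empty, ← aB_inf, disjoint_iff.mp hyd, aB_bot]
  constructor
  · rw [Set.finite_union, Set.finite_union]
    constructor
    · rintro ⟨h1, h2⟩; exact ⟨h.1.mp h1, h'.1.mp h2⟩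
    · rintro ⟨h1, h2⟩; exact ⟨h.1.mpr h1, h'.1.mpr h2⟩
  · by_cases hfin : (aB x).Finite ∧ (aB x').Finite
    · rw [Set.ncard_union_eq hdx hfin.1 hfin.2,
        Set.ncard_union_eq hdy (h.1.mp hfin.1) (h'.1.mp hfin.2), h.2, h'.2]
    · have : (aB x ∪ aB x').Infinite := by
        rw [Set.infinite_union]
        rcases not_and_or.mp hfin with h1 | h1
        · exact Or.inl ((fun hf => h1 hf))
        · exact Or.inr ((fun hf => h1 hf))
      have that : (aB y ∪ aB y').Infinite := by
        rw [Set.infinite_union]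
        rcases not_and_or.mp hfin with h1 | h1
        · exact Or.inl fun hf => h1 (h.1.mpr hf)
        · exact Or.inr fun hf => h1 (h'.1.mpr hf)
      rw [this.ncard, that.ncard]

lemma sac_finsup {ι : Type*} (s : Finset ι) (u : ι → γ) (v : ι → δ)
    (hu : ∀ i ∈ s, ∀ j ∈ s, i ≠ j → Disjoint (u i) (u j))
    (hv : ∀ i ∈ s, ∀ j ∈ s, i ≠ j → Disjoint (v i) (v j))
    (h : ∀ i ∈ s, SameAtomCount (u i) (v i)) :
    SameAtomCount (s.sup u) (s.sup v) := by
  induction s using Finset.induction_on with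
  | empty => simpa using sac_bot_bot
  | insert i s hns ih =>
      rw [Finset.sup_insert, Finset.sup_insert]
      have hmem : ∀ j ∈ s, j ∈ insert i s := fun j hj => Finset.mem_insert_of_mem hj
      refine sac_sup ?_ ?_ (h i (Finset.mem_insert_self i s)) ?_
      · rw [Finset.disjoint_sup_right]
        intro j hj
        exact hu i (Finset.mem_insert_self i s) j (hmem j hj)
          (fun hij => hns (hij ▸ hj))
      · rw [Finset.disjoint_sup_right]
        intro j hj
        exact hv i (Finset.mem_insert_self i s) j (hmem j hj)
          (fun hij => hns (hij ▸ hj))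
      · exact ih (fun i hi j hj hij => hu i (hmem i hi) j (hmem j hj) hij)
          (fun i hi j hj hij => hv i (hmem i hi) j (hmem j hj) hij)
          (fun i hi => h i (hmem i hi))

lemma sup_atoms_le {y : δ} (Q : Finset δ) (hQ : ↑Q ⊆ aB y) : Q.sup id ≤ y :=
  Finset.sup_le fun b hb => (hQ hb).2

lemma aB_of_subset_atoms {y : δ} (Q : Finset δ) (hQ : ↑Q ⊆ aB y) : aB (Q.sup id) = ↑Q :=
  aB_sup_atoms Q fun b hb => (hQ hb).1

/-- Matching lemma: given a split of `x` (into `v ≤ x` and `x \ v`) and `y` with the same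
atom count as `x`, we can split `y` correspondingly. -/
lemma match_split [IsAtomic γ] [IsAtomic δ]
    (hsplit : ∀ u : δ, InfiniteElt u →
      ∃ v w : δ, InfiniteElt v ∧ InfiniteElt w ∧ v ⊓ w = ⊥ ∧ v ⊔ w = u)
    {x v : γ} (hvx : v ≤ x) {y : δ} (h : SameAtomCount x y) :
    ∃ q : δ, q ≤ y ∧ SameAtomCount v q ∧ SameAtomCount (x \ v) (y \ q) := by
  have hx : aB x = aB v ∪ aB (x \ v) := by
    rw [← aB_sup, sup_comm, sdiff_sup_cancel hvx]
  have hdisj : Disjoint (aB v) (aB (x \ v)) := by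
    rw [Set.disjoint_iff_inter_eq_empty, ← aB_inf, inf_sdiff_self_right, aB_bot]
  rw [sac_def] at h
  by_cases h1 : (aB v).Finite
  · by_cases h2 : (aB (x \ v)).Finite
    · -- both finite
      have hxf : (aB x).Finite := by rw [hx]; exact h1.union h2
      have hyf : (aB y).Finite := h.1.mp hxf
      have hcard : (aB y).ncard = (aB v).ncard + (aB (x \ v)).ncard := by
        rw [← h.2, hx, Set.ncard_union_eq hdisj h1 h2]
      have hle : (aB v).ncard ≤ hyf.toFinset.card := by
        rw [← Set.ncard_eq_toFinset_card _ hyf, hcard]; omega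
      obtain ⟨Q, hQsub, hQcard⟩ := Finset.exists_subset_card_eq hle
      have hQy : ↑Q ⊆ aB y := fun b hb => (Set.Finite.mem_toFinset hyf).mp (hQsub hb)
      refine ⟨Q.sup id, sup_atoms_le Q hQy, ?_, ?_⟩
      · rw [sac_def, aB_of_subset_atoms Q hQy]
        constructor
        · simp [h1, Q.finite_toSet]
        · rw [Set.ncard_coe_finset, hQcard]
      · rw [sac_def, aB_sdiff, aB_sdiff, aB_of_subset_atoms Q hQy]
        constructor
        · constructor
          · intro _; exact hyf.subset Set.diff_subset
          · intro _; rw [← aB_sdiff]; exact h2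
        · rw [← aB_sdiff x v, Set.ncard_diff hQy Q.finite_toSet, Set.ncard_coe_finset, hQcard, hcard]
          omega
    · -- v finite, x \ v infinite
      have hxi : (aB x).Infinite := by
        rw [hx, Set.infinite_union]; exact Or.inr h2
      have hyi : (aB y).Infinite := fun hf => hxi (h.1.mpr hf)
      obtain ⟨Q, hQy, hQcard⟩ := hyi.exists_subset_card_eq (aB v).ncard
      refine ⟨Q.sup id, sup_atoms_le Q hQy, ?_, ?_⟩
      · rw [sac_def, aB_of_subset_atoms Q hQy]
        constructor
        · simp [h1, Q.finite_toSet]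
        · rw [Set.ncard_coe_finset, hQcard]
      · apply sac_of_aB_infinite h2
        rw [aB_sdiff, aB_of_subset_atoms Q hQy]
        exact hyi.diff Q.finite_toSet
  · by_cases h2 : (aB (x \ v)).Finite
    · -- v infinite, x \ v finite
      have hxi : (aB x).Infinite := by
        rw [hx, Set.infinite_union]; exact Or.inl h1
      have hyi : (aB y).Infinite := fun hf => hxi (h.1.mpr hf)
      obtain ⟨Q, hQy, hQcard⟩ := hyi.exists_subset_card_eq (aB (x \ v)).ncard
      have hsle : Q.sup id ≤ y := sup_atoms_le Q hQy
      refine ⟨y \ Q.sup id, sdiff_le, ?_, ?_⟩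
      · apply sac_of_aB_infinite h1
        rw [aB_sdiff, aB_of_subset_atoms Q hQy]
        exact hyi.diff Q.finite_toSet
      · rw [sdiff_sdiff_right_self, inf_eq_right.mpr hsle, sac_def,
          aB_of_subset_atoms Q hQy]
        constructor
        · constructor
          · intro _; exact Q.finite_toSet
          · intro _; exact h2
        · rw [Set.ncard_coe_finset, hQcard]
    · -- both infinite
      have hxi : (aB x).Infinite := by
        rw [hx, Set.infinite_union]; exact Or.inl h1
      have hyi : (aB y).Infinite := fun hf => hxi (h.1.mpr hf)
      obtain ⟨v', w', hv', hw', hvw, hsup⟩ := hsplit y (infiniteElt_iff.mpr hyi)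
      refine ⟨v', hsup ▸ le_sup_left, ?_, ?_⟩
      · exact sac_of_aB_infinite h1 (infiniteElt_iff.mp hv')
      · have hyv : y \ v' = w' := by
          rw [← hsup]
          exact (disjoint_iff.mpr hvw).sup_sdiff_cancel_left
        rw [hyv]
        exact sac_of_aB_infinite h2 (infiniteElt_iff.mp hw')

/-- Outside lemma: find an element disjoint from `y₀` with any prescribed atom count. -/
lemma match_out [IsAtomic γ] [IsAtomic δ]
    (hdisj : ∀ x : δ, ∃ u : δ, InfiniteElt u ∧ x ⊓ u = ⊥)
    (p : γ) (y₀ : δ) :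
    ∃ q : δ, q ⊓ y₀ = ⊥ ∧ SameAtomCount p q := by
  obtain ⟨u, hu, huy⟩ := hdisj y₀
  have hui : (aB u).Infinite := infiniteElt_iff.mp hu
  by_cases h1 : (aB p).Finite
  · obtain ⟨Q, hQu, hQcard⟩ := hui.exists_subset_card_eq (aB p).ncard
    refine ⟨Q.sup id, ?_, ?_⟩
    · have hle2 : Q.sup id ⊓ y₀ ≤ u ⊓ y₀ := inf_le_inf_right _ (sup_atoms_le Q hQu)
      have huy' : u ⊓ y₀ = ⊥ := by rw [inf_comm]; exact huy
      exact le_bot_iff.mp (huy' ▸ hle2)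
    · rw [sac_def, aB_of_subset_atoms Q hQu]
      constructor
      · simp [h1, Q.finite_toSet]
      · rw [Set.ncard_coe_finset, hQcard]
  · refine ⟨u, by rw [inf_comm]; exact huy, ?_⟩
    exact sac_of_aB_infinite h1 hui

open scoped Classical in
/-- `c` is a cell (minimal nonzero element) of the finite subalgebra `S`. -/
def IsCell (S : Finset γ) (c : γ) : Prop :=
  c ∈ S ∧ c ≠ ⊥ ∧ ∀ x ∈ S, c ⊓ x = ⊥ ∨ c ≤ x

lemma cell_disjoint {S : Finset γ} {c c' : γ} (hc : IsCell S c) (hc' : IsCell S c')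
    (hne : c ≠ c') : c ⊓ c' = ⊥ := by
  rcases hc.2.2 c' hc'.1 with h | h
  · exact h
  rcases hc'.2.2 c hc.1 with h' | h'
  · rw [inf_comm] at h'; exact h'
  · exact absurd (le_antisymm h h') hne

lemma sup_mem_closed {S : Finset γ} (hbot : (⊥:γ) ∈ S)
    (hsupS : ∀ x ∈ S, ∀ y ∈ S, x ⊔ y ∈ S) {T : Finset γ} (hT : T ⊆ S) :
    T.sup id ∈ S := by
  induction T using Finset.induction_on with
  | empty => simpa using hbot
  | insert a T h ih =>
      rw [Finset.sup_insert]
      exact hsupS _ (hT (Finset.mem_insert_self a T)) _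
        (ih fun x hx => hT (Finset.mem_insert_of_mem hx))

open scoped Classical in
lemma cell_decomp {S : Finset γ} (hbot : (⊥:γ) ∈ S)
    (hsupS : ∀ x ∈ S, ∀ y ∈ S, x ⊔ y ∈ S)
    (hinfS : ∀ x ∈ S, ∀ y ∈ S, x ⊓ y ∈ S)
    (hsdiffS : ∀ x ∈ S, ∀ y ∈ S, x \ y ∈ S)
    {x : γ} (hx : x ∈ S) :
    (S.filter (fun c => IsCell S c ∧ c ≤ x)).sup id = x := by
  set j := (S.filter (fun c => IsCell S c ∧ c ≤ x)).sup id with hj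
  have hjS : j ∈ S := sup_mem_closed hbot hsupS (Finset.filter_subset _ _)
  have hjx : j ≤ x := Finset.sup_le fun c hc => ((Finset.mem_filter.mp hc).2).2
  refine le_antisymm hjx ?_
  by_contra hxj
  have hne : x \ j ≠ ⊥ := fun hb => hxj (sdiff_eq_bot_iff.mp hb)
  have hxjS : x \ j ∈ S := hsdiffS x hx j hjS
  set M := S.filter (fun z => z ≠ ⊥ ∧ z ≤ x \ j) with hM
  have hMne : M.Nonempty := ⟨x \ j, Finset.mem_filter.mpr ⟨hxjS, hne, le_rfl⟩⟩
  obtain ⟨d, hdM, hdmin⟩ : ∃ d ∈ M, ∀ x ∈ M, ¬ x < d := by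
    obtain ⟨d, hd⟩ := Finset.exists_minimal hMne
    exact ⟨d, hd.1, fun x hx hlt => lt_irrefl _ (hlt.trans_le (hd.2 hx hlt.le))⟩
  obtain ⟨hdS, hdne, hdle⟩ := Finset.mem_filter.mp hdM
  have hdcell : IsCell S d := by
    refine ⟨hdS, hdne, fun z hz => ?_⟩
    by_cases hdz : d ⊓ z = ⊥
    · exact Or.inl hdz
    · right
      have hmem : d ⊓ z ∈ M := Finset.mem_filter.mpr
        ⟨hinfS d hdS z hz, hdz, le_trans inf_le_left hdle⟩
      have : ¬ d ⊓ z < d := hdmin _ hmem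
      have heq : d ⊓ z = d := by
        rcases eq_or_lt_of_le (inf_le_left : d ⊓ z ≤ d) with h | h
        · exact h
        · exact absurd h this
      rw [← heq]; exact inf_le_right
  have hdj : d ≤ j := by
    rw [hj]
    exact Finset.le_sup (f := id) (Finset.mem_filter.mpr
      ⟨hdS, hdcell, hdle.trans sdiff_le⟩)
  have : d ≤ ⊥ := by
    have h1 : d ≤ j ⊓ (x \ j) := le_inf hdj hdle
    have h2 : j ⊓ (x \ j) = ⊥ := by
      rw [inf_comm]; exact disjoint_iff.mp disjoint_sdiff_self_left
    rw [h2] at h1; exact h1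
  exact hdne (le_bot_iff.mp this)

lemma inf_sdiff_inf_eq (x a x' : γ) : (x ⊓ a) ⊓ (x' ⊓ a) = (x ⊓ x') ⊓ a := by
  rw [inf_inf_inf_comm, inf_idem]

lemma sdiff_inf_sdiff_eq (y a y' : γ) : (y \ a) ⊓ (y' \ a) = (y ⊓ y') \ a := by
  apply le_antisymm
  · rw [le_sdiff]
    exact ⟨le_inf (inf_le_left.trans sdiff_le) (inf_le_right.trans sdiff_le),
      disjoint_sdiff_self_left.mono_left inf_le_left⟩
  · exact le_inf (sdiff_le_sdiff_right inf_le_left) (sdiff_le_sdiff_right inf_le_right)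

lemma inf_sdiff_inf_sdiff_eq (x a x' : γ) : (x ⊓ a) \ (x' ⊓ a) = (x \ x') ⊓ a := by
  rw [sdiff_inf, sdiff_eq_bot_iff.mpr (inf_le_right : x ⊓ a ≤ a), sup_bot_eq]
  apply le_antisymm
  · exact le_inf (sdiff_le_sdiff_right inf_le_left) (sdiff_le.trans inf_le_right)
  · rw [le_sdiff]
    exact ⟨inf_le_inf_right a sdiff_le, disjoint_sdiff_self_left.mono_left inf_le_left⟩

lemma sdiff_sdiff_sdiff_eq (y a y' : γ) : (y \ a) \ (y' \ a) = (y \ y') \ a := by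
  rw [sdiff_sdiff_right', inf_sdiff_self_left, sup_bot_eq, sdiff_sdiff,
    sdiff_sdiff, sup_comm]

lemma tri_sdiff {u1 u2 u3 v1 v2 v3 : γ}
    (h12 : u1 ⊓ v2 = ⊥) (h13 : u1 ⊓ v3 = ⊥) (h21 : u2 ⊓ v1 = ⊥)
    (h23 : u2 ⊓ v3 = ⊥) (h31 : u3 ⊓ v1 = ⊥) (h32 : u3 ⊓ v2 = ⊥) :
    (u1 ⊔ u2 ⊔ u3) \ (v1 ⊔ v2 ⊔ v3) = (u1 \ v1) ⊔ (u2 \ v2) ⊔ (u3 \ v3) := by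
  have key : ∀ u w1 w2 w3 : γ, u ⊓ w2 = ⊥ → u ⊓ w3 = ⊥ →
      u \ (w1 ⊔ w2 ⊔ w3) = u \ w1 := by
    intro u w1 w2 w3 hw2 hw3
    rw [sdiff_sup, sdiff_sup, (disjoint_iff.mpr hw2).sdiff_eq_left,
      (disjoint_iff.mpr hw3).sdiff_eq_left, inf_of_le_left (sdiff_le : u \ w1 ≤ u),
      inf_of_le_left (sdiff_le : u \ w1 ≤ u)]
  rw [sup_sdiff, sup_sdiff, key u1 v1 v2 v3 h12 h13]
  congr 1
  · congr 1
    have : v1 ⊔ v2 ⊔ v3 = v2 ⊔ v1 ⊔ v3 := by rw [sup_comm v1 v2]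
    rw [this, key u2 v2 v1 v3 h21 h23]
  · have : v1 ⊔ v2 ⊔ v3 = v3 ⊔ v1 ⊔ v2 := by
      rw [sup_comm, sup_assoc]
    rw [this, key u3 v3 v1 v2 h31 h32]

lemma tri_inf {u1 u2 u3 v1 v2 v3 : γ}
    (h12 : u1 ⊓ v2 = ⊥) (h13 : u1 ⊓ v3 = ⊥) (h21 : u2 ⊓ v1 = ⊥)
    (h23 : u2 ⊓ v3 = ⊥) (h31 : u3 ⊓ v1 = ⊥) (h32 : u3 ⊓ v2 = ⊥) :
    (u1 ⊔ u2 ⊔ u3) ⊓ (v1 ⊔ v2 ⊔ v3) = (u1 ⊓ v1) ⊔ (u2 ⊓ v2) ⊔ (u3 ⊓ v3) := by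
  simp only [inf_sup_right, inf_sup_left, h12, h13, h21, h23, h31, h32,
    sup_bot_eq, bot_sup_eq]

/-- A finite partial isomorphism between generalized Boolean algebras. -/
structure PI (α β : Type*) [GeneralizedBooleanAlgebra α] [GeneralizedBooleanAlgebra β] where
  S : Finset α
  T : Finset β
  f : α → β
  e : β → α
  hT : T = S.image f
  hef : ∀ x ∈ S, e (f x) = x
  hbot : (⊥ : α) ∈ S
  hsupS : ∀ x ∈ S, ∀ y ∈ S, x ⊔ y ∈ S
  hinfS : ∀ x ∈ S, ∀ y ∈ S, x ⊓ y ∈ S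
  hsdiffS : ∀ x ∈ S, ∀ y ∈ S, x \ y ∈ S
  hord : ∀ x ∈ S, ∀ y ∈ S, (x ≤ y ↔ f x ≤ f y)
  hfsup : ∀ x ∈ S, ∀ y ∈ S, f (x ⊔ y) = f x ⊔ f y
  hfinf : ∀ x ∈ S, ∀ y ∈ S, f (x ⊓ y) = f x ⊓ f y
  hfsdiff : ∀ x ∈ S, ∀ y ∈ S, f (x \ y) = f x \ f y
  hcells : ∀ x ∈ S, SameAtomCount x (f x)

namespace PI

variable {α β : Type*} [GeneralizedBooleanAlgebra α] [GeneralizedBooleanAlgebra β]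
variable (P : PI α β)

lemma fbot : P.f ⊥ = ⊥ := by
  have h := P.hfsdiff ⊥ P.hbot ⊥ P.hbot
  rw [sdiff_self] at h
  rw [h, sdiff_self]

lemma fmem {x : α} (hx : x ∈ P.S) : P.f x ∈ P.T := by
  rw [P.hT]; exact Finset.mem_image_of_mem _ hx

lemma finj {x y : α} (hx : x ∈ P.S) (hy : y ∈ P.S) (h : P.f x = P.f y) : x = y :=
  le_antisymm ((P.hord x hx y hy).mpr h.le) ((P.hord y hy x hx).mpr h.ge)

/-- The swapped partial isomorphism. -/
def swap : PI β α where
  S := P.T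
  T := P.S
  f := P.e
  e := P.f
  hT := by
    rw [P.hT, Finset.image_image]
    ext x
    simp only [Finset.mem_image, Function.comp_apply]
    constructor
    · intro hx; exact ⟨x, hx, P.hef x hx⟩
    · rintro ⟨y, hy, rfl⟩; rwa [P.hef y hy]
  hef := by
    rintro y hy
    rw [P.hT, Finset.mem_image] at hy
    obtain ⟨x, hx, rfl⟩ := hy
    rw [P.hef x hx]
  hbot := by
    rw [P.hT, Finset.mem_image]
    exact ⟨⊥, P.hbot, P.fbot⟩
  hsupS := by
    rintro y hy y' hy'
    rw [P.hT, Finset.mem_image] at hy hy' ⊢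
    obtain ⟨x, hx, rfl⟩ := hy; obtain ⟨x', hx', rfl⟩ := hy'
    exact ⟨x ⊔ x', P.hsupS x hx x' hx', P.hfsup x hx x' hx'⟩
  hinfS := by
    rintro y hy y' hy'
    rw [P.hT, Finset.mem_image] at hy hy' ⊢
    obtain ⟨x, hx, rfl⟩ := hy; obtain ⟨x', hx', rfl⟩ := hy'
    exact ⟨x ⊓ x', P.hinfS x hx x' hx', P.hfinf x hx x' hx'⟩
  hsdiffS := by
    rintro y hy y' hy'
    rw [P.hT, Finset.mem_image] at hy hy' ⊢
    obtain ⟨x, hx, rfl⟩ := hy; obtain ⟨x', hx', rfl⟩ := hy'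
    exact ⟨x \ x', P.hsdiffS x hx x' hx', P.hfsdiff x hx x' hx'⟩
  hord := by
    rintro y hy y' hy'
    rw [P.hT, Finset.mem_image] at hy hy'
    obtain ⟨x, hx, rfl⟩ := hy; obtain ⟨x', hx', rfl⟩ := hy'
    rw [P.hef x hx, P.hef x' hx']
    exact (P.hord x hx x' hx').symm
  hfsup := by
    rintro y hy y' hy'
    rw [P.hT, Finset.mem_image] at hy hy'
    obtain ⟨x, hx, rfl⟩ := hy; obtain ⟨x', hx', rfl⟩ := hy'
    rw [P.hef x hx, P.hef x' hx', ← P.hfsup x hx x' hx',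
      P.hef _ (P.hsupS x hx x' hx')]
  hfinf := by
    rintro y hy y' hy'
    rw [P.hT, Finset.mem_image] at hy hy'
    obtain ⟨x, hx, rfl⟩ := hy; obtain ⟨x', hx', rfl⟩ := hy'
    rw [P.hef x hx, P.hef x' hx', ← P.hfinf x hx x' hx',
      P.hef _ (P.hinfS x hx x' hx')]
  hfsdiff := by
    rintro y hy y' hy'
    rw [P.hT, Finset.mem_image] at hy hy'
    obtain ⟨x, hx, rfl⟩ := hy; obtain ⟨x', hx', rfl⟩ := hy'
    rw [P.hef x hx, P.hef x' hx', ← P.hfsdiff x hx x' hx',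
      P.hef _ (P.hsdiffS x hx x' hx')]
  hcells := by
    rintro y hy
    rw [P.hT, Finset.mem_image] at hy
    obtain ⟨x, hx, rfl⟩ := hy
    rw [P.hef x hx]
    exact sac_symm (P.hcells x hx)

end PI

lemma finset_sup_sdiff {ι : Type*} (s : Finset ι) (g : ι → γ) (x : γ) :
    (s.sup g) \ x = s.sup (fun i => g i \ x) := by
  induction s using Finset.induction_on with
  | empty => simp
  | insert b s h ih =>
      rw [Finset.sup_insert, Finset.sup_insert, sup_sdiff, ih]

theorem forth {α β : Type*} [GeneralizedBooleanAlgebra α] [GeneralizedBooleanAlgebra β]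
    [IsAtomic α] [IsAtomic β]
    (hsplitβ : ∀ u : β, InfiniteElt u →
      ∃ v w : β, InfiniteElt v ∧ InfiniteElt w ∧ v ⊓ w = ⊥ ∧ v ⊔ w = u)
    (hdisjβ : ∀ x : β, ∃ u : β, InfiniteElt u ∧ x ⊓ u = ⊥)
    (P : PI α β) (a : α) :
    ∃ P' : PI α β, P.S ⊆ P'.S ∧ (∀ x ∈ P.S, P'.f x = P.f x) ∧ a ∈ P'.S := by
  classical
  obtain ⟨S, T, f, e, hT, hef, hbot, hsupS, hinfS, hsdiffS, hord, hfsup, hfinf,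
    hfsdiff, hcells⟩ := P
  simp only
  have hfbot : f ⊥ = ⊥ := by
    have h := hfsdiff ⊥ hbot ⊥ hbot
    rw [sdiff_self] at h; rw [h, sdiff_self]
  set m := S.sup id with hm
  have hmS : m ∈ S := sup_mem_closed hbot hsupS (Finset.Subset.refl S)
  have hlm : ∀ x ∈ S, x ≤ m := fun x hx => Finset.le_sup (f := id) hx
  set C := S.filter (fun c => IsCell S c) with hC
  have hCS : ∀ c ∈ C, c ∈ S := fun c hc => (Finset.mem_filter.mp hc).1
  have hCcell : ∀ c ∈ C, IsCell S c := fun c hc => (Finset.mem_filter.mp hc).2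
  have hCm : ∀ c ∈ C, c ≤ m := fun c hc => hlm c (hCS c hc)
  set p0 := a \ m with hp0
  have hp0m : p0 ⊓ m = ⊥ := by rw [inf_comm]; exact inf_sdiff_self_right
  have hp0a : p0 ≤ a := sdiff_le
  -- choice of the cell splittings on the β side
  have hex : ∀ c : α, ∃ q : β, c ∈ C →
      q ≤ f c ∧ SameAtomCount (c ⊓ a) q ∧ SameAtomCount (c \ a) (f c \ q) := by
    intro c
    by_cases hc : c ∈ C
    · obtain ⟨q, hql, hq2, hq3⟩ :=
        match_split hsplitβ (inf_le_left : c ⊓ a ≤ c) (hcells c (hCS c hc))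
      refine ⟨q, fun _ => ⟨hql, hq2, ?_⟩⟩
      have hca : c \ (c ⊓ a) = c \ a := by rw [sdiff_inf, sdiff_self, bot_sup_eq]
      rwa [hca] at hq3
    · exact ⟨⊥, fun h => absurd h hc⟩
  choose q1 hq1spec using hex
  set q2 : α → β := fun c => f c \ q1 c with hq2def
  obtain ⟨q0, hq0m, hq0sac⟩ := match_out hdisjβ p0 (f m)
  have hq1le : ∀ c ∈ C, q1 c ≤ f c := fun c hc => (hq1spec c hc).1
  have hq2le : ∀ c, q2 c ≤ f c := fun c => sdiff_le
  have hsac1 : ∀ c ∈ C, SameAtomCount (c ⊓ a) (q1 c) := fun c hc => (hq1spec c hc).2.1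
  have hsac2 : ∀ c ∈ C, SameAtomCount (c \ a) (q2 c) := fun c hc => (hq1spec c hc).2.2
  have hq12 : ∀ c ∈ C, q1 c ⊔ q2 c = f c := fun c hc =>
    sup_sdiff_cancel' le_rfl (hq1le c hc)
  have hq12d : ∀ c, q1 c ⊓ q2 c = ⊥ := fun c => inf_sdiff_self_right
  have hq1bot : ∀ c ∈ C, c ⊓ a = ⊥ → q1 c = ⊥ :=
    fun c hc h => sac_bot_right (hsac1 c hc) h
  have hq1ne : ∀ c ∈ C, q1 c = ⊥ → c ⊓ a = ⊥ :=
    fun c hc h => sac_bot_right (sac_symm (hsac1 c hc)) h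
  have hq2bot : ∀ c ∈ C, c \ a = ⊥ → q2 c = ⊥ :=
    fun c hc h => sac_bot_right (hsac2 c hc) h
  have hq2ne : ∀ c ∈ C, q2 c = ⊥ → c \ a = ⊥ :=
    fun c hc h => sac_bot_right (sac_symm (hsac2 c hc)) h
  have hq0bot : p0 = ⊥ → q0 = ⊥ := fun h => sac_bot_right hq0sac h
  have hq0ne : q0 = ⊥ → p0 = ⊥ := fun h => sac_bot_right (sac_symm hq0sac) h
  -- the extended map
  set U : α → α → β := fun t c =>
    (if c ⊓ a ≤ t then q1 c else ⊥) ⊔ (if c \ a ≤ t then q2 c else ⊥) with hU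
  set Z : α → β := fun t => if p0 ≤ t then q0 else ⊥ with hZ
  set F : α → β := fun t => C.sup (U t) ⊔ Z t with hFdef
  -- the extended domain
  set S' : Finset α := ((S ×ˢ S) ×ˢ ({⊥, p0} : Finset α)).image
      (fun y => (y.1.1 ⊓ a) ⊔ (y.1.2 \ a) ⊔ y.2) with hS'def
  have hS'mem : ∀ t, t ∈ S' ↔
      ∃ x ∈ S, ∃ y ∈ S, ∃ z, (z = ⊥ ∨ z = p0) ∧ t = (x ⊓ a) ⊔ (y \ a) ⊔ z := by
    intro t
    simp only [hS'def, Finset.mem_image, Finset.mem_product, Finset.mem_insert,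
      Finset.mem_singleton, Prod.exists]
    constructor
    · rintro ⟨x, y, z, ⟨⟨hx, hy⟩, hz⟩, rfl⟩
      exact ⟨x, hx, y, hy, z, hz, rfl⟩
    · rintro ⟨x, hx, y, hy, z, hz, rfl⟩
      exact ⟨x, y, z, ⟨⟨hx, hy⟩, hz⟩, rfl⟩
  -- cross disjointness of the three kinds of components
  have hd1 : ∀ x y : α, (x ⊓ a) ⊓ (y \ a) = ⊥ := by
    intro x y
    apply le_bot_iff.mp
    calc (x ⊓ a) ⊓ (y \ a) ≤ a ⊓ (y \ a) := inf_le_inf_right _ inf_le_right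
    _ = ⊥ := by rw [inf_comm]; exact inf_sdiff_self_left
  have hd2 : ∀ x ∈ S, ∀ z : α, (z = ⊥ ∨ z = p0) → (x ⊓ a) ⊓ z = ⊥ := by
    rintro x hx z (rfl | rfl)
    · exact inf_bot_eq _
    · apply le_bot_iff.mp
      calc (x ⊓ a) ⊓ p0 ≤ m ⊓ p0 := inf_le_inf_right _ (inf_le_left.trans (hlm x hx))
      _ = ⊥ := by rw [inf_comm]; exact hp0m
  have hd3 : ∀ y : α, ∀ z : α, (z = ⊥ ∨ z = p0) → (y \ a) ⊓ z = ⊥ := by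
    rintro y z (rfl | rfl)
    · exact inf_bot_eq _
    · apply le_bot_iff.mp
      calc (y \ a) ⊓ p0 ≤ (y \ a) ⊓ a := inf_le_inf_left _ hp0a
      _ = ⊥ := inf_sdiff_self_left
  have hzz : ∀ z z' : α, (z = ⊥ ∨ z = p0) → (z' = ⊥ ∨ z' = p0) →
      ((z ⊔ z' = ⊥ ∨ z ⊔ z' = p0) ∧ (z ⊓ z' = ⊥ ∨ z ⊓ z' = p0) ∧ (z \ z' = ⊥ ∨ z \ z' = p0)) := by
    rintro z z' (rfl | rfl) (rfl | rfl) <;> simp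
  -- membership facts
  have hSS' : S ⊆ S' := by
    intro s hs
    exact (hS'mem s).mpr ⟨s, hs, s, hs, ⊥, Or.inl rfl, by rw [sup_bot_eq, sup_inf_sdiff]⟩
  have haS' : a ∈ S' := by
    refine (hS'mem a).mpr ⟨m, hmS, ⊥, hbot, p0, Or.inr rfl, ?_⟩
    rw [bot_sdiff, sup_bot_eq, inf_comm, sup_inf_sdiff]
  have hbotS' : (⊥ : α) ∈ S' := hSS' hbot
  -- closure of S' under the operations
  have hS'sup : ∀ t ∈ S', ∀ t' ∈ S', t ⊔ t' ∈ S' := by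
    intro t ht t' ht'
    obtain ⟨x, hx, y, hy, z, hz, rfl⟩ := (hS'mem t).mp ht
    obtain ⟨x', hx', y', hy', z', hz', rfl⟩ := (hS'mem t').mp ht'
    refine (hS'mem _).mpr ⟨x ⊔ x', hsupS x hx x' hx', y ⊔ y', hsupS y hy y' hy',
      z ⊔ z', (hzz z z' hz hz').1, ?_⟩
    rw [inf_sup_right, sup_sdiff]
    ac_rfl
  have hS'inf : ∀ t ∈ S', ∀ t' ∈ S', t ⊓ t' ∈ S' := by
    intro t ht t' ht'
    obtain ⟨x, hx, y, hy, z, hz, rfl⟩ := (hS'mem t).mp ht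
    obtain ⟨x', hx', y', hy', z', hz', rfl⟩ := (hS'mem t').mp ht'
    refine (hS'mem _).mpr ⟨x ⊓ x', hinfS x hx x' hx', y ⊓ y', hinfS y hy y' hy',
      z ⊓ z', (hzz z z' hz hz').2.1, ?_⟩
    rw [tri_inf (hd1 x y') (hd2 x hx z' hz') (by rw [inf_comm]; exact hd1 x' y)
      (hd3 y z' hz') (by rw [inf_comm]; exact hd2 x' hx' z hz)
      (by rw [inf_comm]; exact hd3 y' z hz),
      inf_sdiff_inf_eq, sdiff_inf_sdiff_eq]
  have hS'sdiff : ∀ t ∈ S', ∀ t' ∈ S', t \ t' ∈ S' := by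
    intro t ht t' ht'
    obtain ⟨x, hx, y, hy, z, hz, rfl⟩ := (hS'mem t).mp ht
    obtain ⟨x', hx', y', hy', z', hz', rfl⟩ := (hS'mem t').mp ht'
    refine (hS'mem _).mpr ⟨x \ x', hsdiffS x hx x' hx', y \ y', hsdiffS y hy y' hy',
      z \ z', (hzz z z' hz hz').2.2, ?_⟩
    rw [tri_sdiff (hd1 x y') (hd2 x hx z' hz') (by rw [inf_comm]; exact hd1 x' y)
      (hd3 y z' hz') (by rw [inf_comm]; exact hd2 x' hx' z hz)
      (by rw [inf_comm]; exact hd3 y' z hz),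
      inf_sdiff_inf_sdiff_eq, sdiff_sdiff_sdiff_eq]
  -- pieces are pseudo-atoms for S'
  have hP1 : ∀ t ∈ S', ∀ c ∈ C, (c ⊓ a) ⊓ t = ⊥ ∨ c ⊓ a ≤ t := by
    intro t ht c hc
    obtain ⟨x, hx, y, hy, z, hz, rfl⟩ := (hS'mem t).mp ht
    have hcomp : (c ⊓ a) ⊓ ((x ⊓ a) ⊔ (y \ a) ⊔ z) = (c ⊓ x) ⊓ a := by
      rw [inf_sup_left, inf_sup_left, inf_sdiff_inf_eq, hd1 c y,
        hd2 c (hCS c hc) z hz, sup_bot_eq, sup_bot_eq]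
    rcases (hCcell c hc).2.2 x hx with h | h
    · left; rw [hcomp, h, bot_inf_eq]
    · right
      have : (c ⊓ x) ⊓ a = c ⊓ a := by rw [inf_eq_left.mpr h]
      rw [← this, ← hcomp]
      exact inf_le_right
  have hP2 : ∀ t ∈ S', ∀ c ∈ C, (c \ a) ⊓ t = ⊥ ∨ c \ a ≤ t := by
    intro t ht c hc
    obtain ⟨x, hx, y, hy, z, hz, rfl⟩ := (hS'mem t).mp ht
    have hcomp : (c \ a) ⊓ ((x ⊓ a) ⊔ (y \ a) ⊔ z) = (c ⊓ y) \ a := by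
      rw [inf_sup_left, inf_sup_left, sdiff_inf_sdiff_eq,
        (by rw [inf_comm]; exact hd1 x c : (c \ a) ⊓ (x ⊓ a) = ⊥),
        hd3 c z hz, bot_sup_eq, sup_bot_eq]
    rcases (hCcell c hc).2.2 y hy with h | h
    · left; rw [hcomp, h, bot_sdiff]
    · right
      have : (c ⊓ y) \ a = c \ a := by rw [inf_eq_left.mpr h]
      rw [← this, ← hcomp]
      exact inf_le_right
  have hP0 : ∀ t ∈ S', p0 ⊓ t = ⊥ ∨ p0 ≤ t := by
    intro t ht
    obtain ⟨x, hx, y, hy, z, hz, rfl⟩ := (hS'mem t).mp ht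
    have hcomp : p0 ⊓ ((x ⊓ a) ⊔ (y \ a) ⊔ z) = p0 ⊓ z := by
      rw [inf_sup_left, inf_sup_left,
        (by rw [inf_comm]; exact hd2 x hx p0 (Or.inr rfl) : p0 ⊓ (x ⊓ a) = ⊥),
        (by rw [inf_comm]; exact hd3 y p0 (Or.inr rfl) : p0 ⊓ (y \ a) = ⊥),
        bot_sup_eq, bot_sup_eq]
    rcases hz with rfl | rfl
    · left; rw [hcomp, inf_bot_eq]
    · right; rw [hcomp, inf_idem] at *
      calc p0 = p0 ⊓ ((x ⊓ a) ⊔ (y \ a) ⊔ p0) := by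
            rw [inf_eq_left.mpr le_sup_right]
      _ ≤ _ := inf_le_right
  -- f of sups
  have hfT : ∀ T' : Finset α, T' ⊆ S → f (T'.sup id) = T'.sup f := by
    intro T'
    induction T' using Finset.induction_on with
    | empty => intro _; simpa using hfbot
    | insert b T' h ih =>
        intro hsub
        have hb : b ∈ S := hsub (Finset.mem_insert_self b T')
        have hT'sub : T' ⊆ S := fun x hx => hsub (Finset.mem_insert_of_mem hx)
        rw [Finset.sup_insert, Finset.sup_insert, id_eq, hfsup b hb _
          (sup_mem_closed hbot hsupS hT'sub), ih hT'sub]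
  -- the crucial decomposition of elements of S' into pieces
  have hRt : ∀ t ∈ S',
      (C.sup fun c => (if c ⊓ a ≤ t then c ⊓ a else ⊥) ⊔ (if c \ a ≤ t then c \ a else ⊥))
        ⊔ (if p0 ≤ t then p0 else ⊥) = t := by
    intro t ht
    apply le_antisymm
    · apply sup_le
      · apply Finset.sup_le
        intro c _
        apply sup_le
        · split_ifs with h; exacts [h, bot_le]
        · split_ifs with h; exacts [h, bot_le]
      · split_ifs with h; exacts [h, bot_le]
    · obtain ⟨x, hx, y, hy, z, hz, rfl⟩ := (hS'mem t).mp ht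
      apply sup_le
      apply sup_le
      · -- x ⊓ a
        have hx' := cell_decomp hbot hsupS hinfS hsdiffS hx
        calc x ⊓ a = (S.filter (fun c => IsCell S c ∧ c ≤ x)).sup id ⊓ a := by rw [hx']
        _ = (S.filter (fun c => IsCell S c ∧ c ≤ x)).sup (fun c => c ⊓ a) := by
              rw [Finset.sup_inf_distrib_right]; rfl
        _ ≤ _ := by
              apply Finset.sup_le
              intro c hcf
              obtain ⟨hcS', hcell, hcx⟩ := Finset.mem_filter.mp hcf
              have hcC : c ∈ C := Finset.mem_filter.mpr ⟨hcS', hcell⟩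
              have hcond : c ⊓ a ≤ (x ⊓ a) ⊔ (y \ a) ⊔ z :=
                le_trans (inf_le_inf_right a hcx) (le_sup_left.trans le_sup_left)
              refine le_trans ?_ ((Finset.le_sup (f := fun c =>
                (if c ⊓ a ≤ (x ⊓ a) ⊔ (y \ a) ⊔ z then c ⊓ a else ⊥) ⊔
                (if c \ a ≤ (x ⊓ a) ⊔ (y \ a) ⊔ z then c \ a else ⊥)) hcC).trans le_sup_left)
              rw [if_pos hcond]
              exact le_sup_left
      · -- y \ a
        have hy' := cell_decomp hbot hsupS hinfS hsdiffS hy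
        calc y \ a = (S.filter (fun c => IsCell S c ∧ c ≤ y)).sup id \ a := by rw [hy']
        _ = (S.filter (fun c => IsCell S c ∧ c ≤ y)).sup (fun c => c \ a) := by
              rw [finset_sup_sdiff]; rfl
        _ ≤ _ := by
              apply Finset.sup_le
              intro c hcf
              obtain ⟨hcS', hcell, hcy⟩ := Finset.mem_filter.mp hcf
              have hcC : c ∈ C := Finset.mem_filter.mpr ⟨hcS', hcell⟩
              have hcond : c \ a ≤ (x ⊓ a) ⊔ (y \ a) ⊔ z :=
                le_trans (sdiff_le_sdiff_right hcy) (le_sup_right.trans le_sup_left)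
              refine le_trans ?_ ((Finset.le_sup (f := fun c =>
                (if c ⊓ a ≤ (x ⊓ a) ⊔ (y \ a) ⊔ z then c ⊓ a else ⊥) ⊔
                (if c \ a ≤ (x ⊓ a) ⊔ (y \ a) ⊔ z then c \ a else ⊥)) hcC).trans le_sup_left)
              rw [if_pos hcond]
              exact le_sup_right
      · rcases hz with rfl | rfl
        · exact bot_le
        · have hcond : p0 ≤ (x ⊓ a) ⊔ (y \ a) ⊔ p0 := le_sup_right
          calc p0 = (if p0 ≤ (x ⊓ a) ⊔ (y \ a) ⊔ p0 then p0 else ⊥) := (if_pos hcond).symm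
          _ ≤ _ := le_sup_right
  -- F agrees with f on S
  have hFS : ∀ t ∈ S, F t = f t := by
    intro t ht
    have hZbot : Z t = ⊥ := by
      simp only [hZ]
      split_ifs with h
      · exact hq0bot (by
          calc p0 = p0 ⊓ m := (inf_eq_left.mpr (h.trans (hlm t ht))).symm
          _ = ⊥ := hp0m)
      · rfl
    have hUt : ∀ c ∈ C, U t c = if c ≤ t then f c else ⊥ := by
      intro c hc
      simp only [hU]
      by_cases hct : c ≤ t
      · rw [if_pos (inf_le_left.trans hct), if_pos (sdiff_le.trans hct), if_pos hct,
          hq12 c hc]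
      · rcases (hCcell c hc).2.2 t ht with hct' | hct'
        · have e1 : (if c ⊓ a ≤ t then q1 c else ⊥) = ⊥ := by
            split_ifs with h
            · exact hq1bot c hc (le_bot_iff.mp (hct' ▸ le_inf inf_le_left h))
            · rfl
          have e2 : (if c \ a ≤ t then q2 c else ⊥) = ⊥ := by
            split_ifs with h
            · exact hq2bot c hc (le_bot_iff.mp (hct' ▸ le_inf sdiff_le h))
            · rfl
          rw [e1, e2, sup_bot_eq, if_neg hct]
        · exact absurd hct' hct
    have : C.sup (U t) = C.sup (fun c => if c ≤ t then f c else ⊥) :=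
      Finset.sup_congr rfl hUt
    rw [hFdef]
    simp only
    rw [this, hZbot, sup_bot_eq, Finset.sup_ite (fun c => c ≤ t)]
    have hsupbot : (C.filter (fun c => ¬ c ≤ t)).sup (fun _ => (⊥ : β)) = ⊥ :=
      le_antisymm (Finset.sup_le fun _ _ => le_rfl) bot_le
    rw [hsupbot, sup_bot_eq]
    have hCf : C.filter (fun c => c ≤ t) = S.filter (fun c => IsCell S c ∧ c ≤ t) := by
      rw [hC, Finset.filter_filter]
    rw [hCf, ← hfT _ (Finset.filter_subset _ _),
      cell_decomp hbot hsupS hinfS hsdiffS ht]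
  -- small bounds
  have hUle : ∀ t, ∀ c ∈ C, U t c ≤ f c := by
    intro t c hc
    apply sup_le
    · split_ifs with h; exacts [hq1le c hc, bot_le]
    · split_ifs with h; exacts [hq2le c, bot_le]
  have hZle : ∀ t, Z t ≤ q0 := by
    intro t; simp only [hZ]; split_ifs with h; exacts [le_rfl, bot_le]
  have hfcfm : ∀ c ∈ C, f c ≤ f m := fun c hc =>
    (hord c (hCS c hc) m hmS).mp (hCm c hc)
  have hfcc : ∀ c ∈ C, ∀ c' ∈ C, c ≠ c' → f c ⊓ f c' = ⊥ := by
    intro c hc c' hc' hne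
    rw [← hfinf c (hCS c hc) c' (hCS c' hc'),
      cell_disjoint (hCcell c hc) (hCcell c' hc') hne, hfbot]
  have hq0fc : ∀ c ∈ C, q0 ⊓ f c = ⊥ := by
    intro c hc
    apply le_bot_iff.mp
    calc q0 ⊓ f c ≤ q0 ⊓ f m := inf_le_inf_left _ (hfcfm c hc)
    _ = ⊥ := hq0m
  -- pieces below F
  have hq1F : ∀ t, ∀ c ∈ C, c ⊓ a ≤ t → q1 c ≤ F t := by
    intro t c hc h
    refine le_trans ?_ ((Finset.le_sup (f := U t) hc).trans le_sup_left)
    simp only [hU]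
    rw [if_pos h]
    exact le_sup_left
  have hq2F : ∀ t, ∀ c ∈ C, c \ a ≤ t → q2 c ≤ F t := by
    intro t c hc h
    refine le_trans ?_ ((Finset.le_sup (f := U t) hc).trans le_sup_left)
    simp only [hU]
    rw [if_pos h]
    exact le_sup_right
  have hq0F : ∀ t, p0 ≤ t → q0 ≤ F t := by
    intro t h
    refine le_trans ?_ (le_sup_right : Z t ≤ F t)
    simp only [hZ]
    rw [if_pos h]
  -- disjointness of pieces from F when the condition fails
  have hq1Fd : ∀ t', ∀ c ∈ C, ¬ (c ⊓ a ≤ t') → q1 c ⊓ F t' = ⊥ := by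
    intro t' c hc h
    apply le_bot_iff.mp
    simp only [hFdef]
    rw [inf_sup_left, Finset.sup_inf_distrib_left]
    apply sup_le
    · apply Finset.sup_le
      intro c' hc'
      by_cases hcc : c' = c
      · subst hcc
        have hU2 : U t' c' ≤ q2 c' := by
          apply sup_le
          · rw [if_neg h]; exact bot_le
          · split_ifs with h2; exacts [le_rfl, bot_le]
        calc q1 c' ⊓ U t' c' ≤ q1 c' ⊓ q2 c' := inf_le_inf_left _ hU2
        _ = ⊥ := hq12d c'
        _ ≤ ⊥ := le_rfl
      · calc q1 c ⊓ U t' c' ≤ f c ⊓ f c' :=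
              inf_le_inf (hq1le c hc) (hUle t' c' hc')
        _ = ⊥ := hfcc c hc c' hc' (fun hccc => hcc hccc.symm)
        _ ≤ ⊥ := le_rfl
    · calc q1 c ⊓ Z t' ≤ f c ⊓ q0 := inf_le_inf (hq1le c hc) (hZle t')
      _ = ⊥ := by rw [inf_comm]; exact hq0fc c hc
      _ ≤ ⊥ := le_rfl
  have hq2Fd : ∀ t', ∀ c ∈ C, ¬ (c \ a ≤ t') → q2 c ⊓ F t' = ⊥ := by
    intro t' c hc h
    apply le_bot_iff.mp
    simp only [hFdef]
    rw [inf_sup_left, Finset.sup_inf_distrib_left]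
    apply sup_le
    · apply Finset.sup_le
      intro c' hc'
      by_cases hcc : c' = c
      · subst hcc
        have hU2 : U t' c' ≤ q1 c' := by
          apply sup_le
          · split_ifs with h2; exacts [le_rfl, bot_le]
          · rw [if_neg h]; exact bot_le
        calc q2 c' ⊓ U t' c' ≤ q2 c' ⊓ q1 c' := inf_le_inf_left _ hU2
        _ = ⊥ := by rw [inf_comm]; exact hq12d c'
        _ ≤ ⊥ := le_rfl
      · calc q2 c ⊓ U t' c' ≤ f c ⊓ f c' :=
              inf_le_inf (hq2le c) (hUle t' c' hc')
        _ = ⊥ := hfcc c hc c' hc' (fun hccc => hcc hccc.symm)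
        _ ≤ ⊥ := le_rfl
    · calc q2 c ⊓ Z t' ≤ f c ⊓ q0 := inf_le_inf (hq2le c) (hZle t')
      _ = ⊥ := by rw [inf_comm]; exact hq0fc c hc
      _ ≤ ⊥ := le_rfl
  have hq0Fd : ∀ t', ¬ (p0 ≤ t') → q0 ⊓ F t' = ⊥ := by
    intro t' h
    apply le_bot_iff.mp
    simp only [hFdef]
    rw [inf_sup_left, Finset.sup_inf_distrib_left]
    apply sup_le
    · apply Finset.sup_le
      intro c' hc'
      calc q0 ⊓ U t' c' ≤ q0 ⊓ f c' := inf_le_inf_left _ (hUle t' c' hc')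
      _ = ⊥ := hq0fc c' hc'
      _ ≤ ⊥ := le_rfl
    · have : Z t' = ⊥ := by simp only [hZ]; rw [if_neg h]
      rw [this, inf_bot_eq]
  have hq1Fc : ∀ t', ∀ c ∈ C, q1 c ≤ F t' → c ⊓ a ≤ t' ∨ q1 c = ⊥ := by
    intro t' c hc hle
    by_cases h : c ⊓ a ≤ t'
    · exact Or.inl h
    · right
      rw [← inf_eq_left.mpr hle]
      exact hq1Fd t' c hc h
  have hq2Fc : ∀ t', ∀ c ∈ C, q2 c ≤ F t' → c \ a ≤ t' ∨ q2 c = ⊥ := by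
    intro t' c hc hle
    by_cases h : c \ a ≤ t'
    · exact Or.inl h
    · right
      rw [← inf_eq_left.mpr hle]
      exact hq2Fd t' c hc h
  have hq0Fc : ∀ t', q0 ≤ F t' → p0 ≤ t' ∨ q0 = ⊥ := by
    intro t' hle
    by_cases h : p0 ≤ t'
    · exact Or.inl h
    · right
      rw [← inf_eq_left.mpr hle]
      exact hq0Fd t' h
  -- monotonicity of F
  have hFmono : ∀ t t' : α, t ≤ t' → F t ≤ F t' := by
    intro t t' htt'
    apply sup_le
    · apply Finset.sup_le
      intro c hc
      apply sup_le
      · split_ifs with h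
        · exact hq1F t' c hc (h.trans htt')
        · exact bot_le
      · split_ifs with h
        · exact hq2F t' c hc (h.trans htt')
        · exact bot_le
    · simp only [hZ]
      split_ifs with h
      · exact hq0F t' (h.trans htt')
      · exact bot_le
  -- F is an order embedding on S'
  have horder' : ∀ t ∈ S', ∀ t' ∈ S', (t ≤ t' ↔ F t ≤ F t') := by
    intro t ht t' ht'
    constructor
    · exact hFmono t t'
    · intro hFF
      conv_lhs => rw [← hRt t ht]
      apply sup_le
      · apply Finset.sup_le
        intro c hc
        apply sup_le
        · split_ifs with h
          · rcases hq1Fc t' c hc ((hq1F t c hc h).trans hFF) with h' | h'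
            · exact h'
            · rw [hq1ne c hc h']; exact bot_le
          · exact bot_le
        · split_ifs with h
          · rcases hq2Fc t' c hc ((hq2F t c hc h).trans hFF) with h' | h'
            · exact h'
            · rw [hq2ne c hc h']; exact bot_le
          · exact bot_le
      · split_ifs with h
        · rcases hq0Fc t' ((hq0F t h).trans hFF) with h' | h'
          · exact h'
          · rw [hq0ne h']; exact bot_le
        · exact bot_le
  -- pieces split over sups of elements of S'
  have hpieceor : ∀ (p t t' : α), (p ⊓ t = ⊥ ∨ p ≤ t) → (p ⊓ t' = ⊥ ∨ p ≤ t') →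
      p ≤ t ⊔ t' → p ≤ t ∨ p ≤ t' := by
    intro p t t' h1 h2 hle
    rcases h1 with h1 | h1
    · rcases h2 with h2 | h2
      · left
        have hp : p = ⊥ := by
          rw [← inf_eq_left.mpr hle, inf_sup_left, h1, h2, sup_bot_eq]
        rw [hp]; exact bot_le
      · exact Or.inr h2
    · exact Or.inl h1
  -- F preserves joins on S'
  have hFsup' : ∀ t ∈ S', ∀ t' ∈ S', F (t ⊔ t') = F t ⊔ F t' := by
    intro t ht t' ht'
    apply le_antisymm
    · apply sup_le
      · apply Finset.sup_le
        intro c hc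
        apply sup_le
        · split_ifs with h
          · rcases hpieceor (c ⊓ a) t t' (hP1 t ht c hc) (hP1 t' ht' c hc) h with h' | h'
            · exact (hq1F t c hc h').trans le_sup_left
            · exact (hq1F t' c hc h').trans le_sup_right
          · exact bot_le
        · split_ifs with h
          · rcases hpieceor (c \ a) t t' (hP2 t ht c hc) (hP2 t' ht' c hc) h with h' | h'
            · exact (hq2F t c hc h').trans le_sup_left
            · exact (hq2F t' c hc h').trans le_sup_right
          · exact bot_le
      · simp only [hZ]
        split_ifs with h
        · rcases hpieceor p0 t t' (hP0 t ht) (hP0 t' ht') h with h' | h'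
          · exact (hq0F t h').trans le_sup_left
          · exact (hq0F t' h').trans le_sup_right
        · exact bot_le
    · exact sup_le (hFmono t _ le_sup_left) (hFmono t' _ le_sup_right)
  -- F preserves differences on S'
  have hFsdiff' : ∀ t ∈ S', ∀ t' ∈ S', F (t \ t') = F t \ F t' := by
    intro t ht t' ht'
    apply le_antisymm
    · rw [le_sdiff]
      refine ⟨hFmono _ _ sdiff_le, ?_⟩
      rw [disjoint_iff]
      apply le_bot_iff.mp
      have hFexp : F (t \ t') ⊓ F t' ≤
          (C.sup fun c => U (t \ t') c ⊓ F t') ⊔ (Z (t \ t') ⊓ F t') := by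
        have : F (t \ t') ⊓ F t' = (C.sup (U (t \ t')) ⊓ F t') ⊔ (Z (t \ t') ⊓ F t') := by
          simp only [hFdef]
          rw [inf_sup_right]
        rw [this, Finset.sup_inf_distrib_right]
      refine hFexp.trans (sup_le ?_ ?_)
      · apply Finset.sup_le
        intro c hc
        have hU2 : U (t \ t') c ⊓ F t' ≤
            ((if c ⊓ a ≤ t \ t' then q1 c else ⊥) ⊓ F t') ⊔
            ((if c \ a ≤ t \ t' then q2 c else ⊥) ⊓ F t') := by
          rw [← inf_sup_right]
        refine hU2.trans (sup_le ?_ ?_)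
        · split_ifs with h
          · by_cases h' : c ⊓ a ≤ t'
            · have : c ⊓ a = ⊥ := le_bot_iff.mp (by
                calc c ⊓ a ≤ (t \ t') ⊓ t' := le_inf h h'
                _ = ⊥ := inf_sdiff_self_left)
              rw [hq1bot c hc this, bot_inf_eq]
            · rw [hq1Fd t' c hc h']
          · rw [bot_inf_eq]
        · split_ifs with h
          · by_cases h' : c \ a ≤ t'
            · have : c \ a = ⊥ := le_bot_iff.mp (by
                calc c \ a ≤ (t \ t') ⊓ t' := le_inf h h'
                _ = ⊥ := inf_sdiff_self_left)
              rw [hq2bot c hc this, bot_inf_eq]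
            · rw [hq2Fd t' c hc h']
          · rw [bot_inf_eq]
      · simp only [hZ]
        split_ifs with h
        · by_cases h' : p0 ≤ t'
          · have : p0 = ⊥ := le_bot_iff.mp (by
              calc p0 ≤ (t \ t') ⊓ t' := le_inf h h'
              _ = ⊥ := inf_sdiff_self_left)
            rw [hq0bot this, bot_inf_eq]
          · rw [hq0Fd t' h']
        · rw [bot_inf_eq]
    · rw [sdiff_le_iff, ← hFsup' t' ht' _ (hS'sdiff t ht t' ht')]
      exact hFmono _ _ (sdiff_le_iff.mp le_rfl)
  -- F preserves meets on S'
  have hFinf' : ∀ t ∈ S', ∀ t' ∈ S', F (t ⊓ t') = F t ⊓ F t' := by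
    intro t ht t' ht'
    have h1 : t ⊓ t' = t \ (t \ t') := sdiff_sdiff_right_self.symm
    rw [h1, hFsdiff' t ht _ (hS'sdiff t ht t' ht'), hFsdiff' t ht t' ht',
      sdiff_sdiff_right_self]
  -- F preserves atom counts on S'
  have hcells' : ∀ t ∈ S', SameAtomCount t (F t) := by
    intro t ht
    have huuc : ∀ c : α,
        ((if c ⊓ a ≤ t then c ⊓ a else ⊥) ⊔ (if c \ a ≤ t then c \ a else ⊥)) ≤ c := by
      intro c
      apply sup_le
      · split_ifs with h; exacts [inf_le_left, bot_le]
      · split_ifs with h; exacts [sdiff_le, bot_le]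
    have h1 : SameAtomCount
        (C.sup fun c => (if c ⊓ a ≤ t then c ⊓ a else ⊥) ⊔ (if c \ a ≤ t then c \ a else ⊥))
        (C.sup (U t)) := by
      apply sac_finsup
      · intro i hi j hj hij
        exact Disjoint.mono (huuc i) (huuc j)
          (disjoint_iff.mpr (cell_disjoint (hCcell i hi) (hCcell j hj) hij))
      · intro i hi j hj hij
        exact Disjoint.mono (hUle t i hi) (hUle t j hj)
          (disjoint_iff.mpr (hfcc i hi j hj hij))
      · intro c hc
        apply sac_sup
        · refine Disjoint.mono ?_ ?_ (disjoint_iff.mpr (hd1 c c))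
          · split_ifs with h; exacts [le_rfl, bot_le]
          · split_ifs with h; exacts [le_rfl, bot_le]
        · refine Disjoint.mono ?_ ?_ (disjoint_iff.mpr (hq12d c))
          · split_ifs with h; exacts [le_rfl, bot_le]
          · split_ifs with h; exacts [le_rfl, bot_le]
        · by_cases h : c ⊓ a ≤ t
          · rw [if_pos h, if_pos h]; exact hsac1 c hc
          · rw [if_neg h, if_neg h]; exact sac_bot_bot
        · by_cases h : c \ a ≤ t
          · rw [if_pos h, if_pos h]; exact hsac2 c hc
          · rw [if_neg h, if_neg h]; exact sac_bot_bot
    have h2 : SameAtomCount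
        ((C.sup fun c => (if c ⊓ a ≤ t then c ⊓ a else ⊥) ⊔ (if c \ a ≤ t then c \ a else ⊥))
          ⊔ (if p0 ≤ t then p0 else ⊥))
        (C.sup (U t) ⊔ Z t) := by
      apply sac_sup
      · refine Disjoint.mono (Finset.sup_le fun c hc => (huuc c).trans (hCm c hc))
          ?_ (disjoint_iff.mpr (by rw [inf_comm]; exact hp0m))
        split_ifs with h; exacts [le_rfl, bot_le]
      · refine Disjoint.mono (Finset.sup_le fun c hc => (hUle t c hc).trans (hfcfm c hc))
          (hZle t) (disjoint_iff.mpr (by rw [inf_comm]; exact hq0m))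
      · exact h1
      · simp only [hZ]
        by_cases h : p0 ≤ t
        · rw [if_pos h, if_pos h]; exact hq0sac
        · rw [if_neg h, if_neg h]; exact sac_bot_bot
    rw [hRt t ht] at h2
    simpa only [hFdef] using h2
  -- injectivity and the inverse map
  have hFinj : ∀ x ∈ S', ∀ y ∈ S', F x = F y → x = y := fun x hx y hy h =>
    le_antisymm ((horder' x hx y hy).mpr h.le) ((horder' y hy x hx).mpr h.ge)
  set e' : β → α := fun y => if h : ∃ x ∈ S', F x = y then h.choose else ⊥ with he'
  have he'F : ∀ x ∈ S', e' (F x) = x := by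
    intro x hx
    have hex' : ∃ x' ∈ S', F x' = F x := ⟨x, hx, rfl⟩
    simp only [he', dif_pos hex']
    obtain ⟨hx', hFx'⟩ := hex'.choose_spec
    exact hFinj _ hx' _ hx hFx'
  exact ⟨⟨S', S'.image F, F, e', rfl, he'F, hbotS', hS'sup, hS'inf, hS'sdiff, horder',
    hFsup', hFinf', hFsdiff', hcells'⟩, hSS', fun x hx => hFS x hx, haS'⟩

theorem back {α β : Type*} [GeneralizedBooleanAlgebra α] [GeneralizedBooleanAlgebra β]
    [IsAtomic α] [IsAtomic β]
    (hsplitα : ∀ u : α, InfiniteElt u →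
      ∃ v w : α, InfiniteElt v ∧ InfiniteElt w ∧ v ⊓ w = ⊥ ∧ v ⊔ w = u)
    (hdisjα : ∀ x : α, ∃ u : α, InfiniteElt u ∧ x ⊓ u = ⊥)
    (P : PI α β) (b : β) :
    ∃ P' : PI α β, P.S ⊆ P'.S ∧ (∀ x ∈ P.S, P'.f x = P.f x) ∧ b ∈ P'.T := by
  obtain ⟨Q, hQS, hQf, hbQ⟩ := forth hsplitα hdisjα P.swap b
  have key : ∀ x ∈ P.S, Q.f (P.f x) = x := by
    intro x hx
    rw [hQf (P.f x) (P.fmem hx)]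
    exact P.hef x hx
  refine ⟨Q.swap, ?_, ?_, ?_⟩
  · intro x hx
    show x ∈ Q.T
    rw [Q.hT, Finset.mem_image]
    exact ⟨P.f x, hQS (P.fmem hx), key x hx⟩
  · intro x hx
    show Q.e x = P.f x
    rw [← key x hx, Q.hef _ (hQS (P.fmem hx)), key x hx]
  · exact hbQ

end BF

/-- Back-and-forth: in countable atomic generalized Boolean algebras without top,
satisfying the two splitting/unboundedness properties, every finite partial isomorphism
whose domain is closed under the lattice operations and which preserves the
atom-cardinality of each cell of the Venn diagram of its domain extends to a full
isomorphism. -/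
theorem stmt11 {α β : Type*} [GeneralizedBooleanAlgebra α] [GeneralizedBooleanAlgebra β]
    [Countable α] [Countable β] [IsAtomic α] [IsAtomic β]
    (htopα : ¬ ∃ t : α, ∀ x : α, x ≤ t) (htopβ : ¬ ∃ t : β, ∀ x : β, x ≤ t)
    (hsplitα : ∀ u : α, InfiniteElt u →
      ∃ v w : α, InfiniteElt v ∧ InfiniteElt w ∧ v ⊓ w = ⊥ ∧ v ⊔ w = u)
    (hsplitβ : ∀ u : β, InfiniteElt u →
      ∃ v w : β, InfiniteElt v ∧ InfiniteElt w ∧ v ⊓ w = ⊥ ∧ v ⊔ w = u)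
    (hdisjα : ∀ x : α, ∃ u : α, InfiniteElt u ∧ x ⊓ u = ⊥)
    (hdisjβ : ∀ x : β, ∃ u : β, InfiniteElt u ∧ x ⊓ u = ⊥)
    (S : Finset α) (f : α → β)
    (hbot : (⊥ : α) ∈ S)
    (hsupS : ∀ x ∈ S, ∀ y ∈ S, x ⊔ y ∈ S)
    (hinfS : ∀ x ∈ S, ∀ y ∈ S, x ⊓ y ∈ S)
    (hsdiffS : ∀ x ∈ S, ∀ y ∈ S, x \ y ∈ S)
    (hord : ∀ x ∈ S, ∀ y ∈ S, x ≤ y ↔ f x ≤ f y)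
    (hfsup : ∀ x ∈ S, ∀ y ∈ S, f (x ⊔ y) = f x ⊔ f y)
    (hfinf : ∀ x ∈ S, ∀ y ∈ S, f (x ⊓ y) = f x ⊓ f y)
    (hfsdiff : ∀ x ∈ S, ∀ y ∈ S, f (x \ y) = f x \ f y)
    (hcells : ∀ x ∈ S, SameAtomCount x (f x)) :
    ∃ g : α ≃o β, ∀ x ∈ S, g x = f x := by
  classical
  -- the initial partial isomorphism
  have hfinj : ∀ x ∈ S, ∀ y ∈ S, f x = f y → x = y := fun x hx y hy h =>
    le_antisymm ((hord x hx y hy).mpr h.le) ((hord y hy x hx).mpr h.ge)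
  set e0 : β → α := fun y => if h : ∃ x ∈ S, f x = y then h.choose else ⊥ with he0
  have he0f : ∀ x ∈ S, e0 (f x) = x := by
    intro x hx
    have hex' : ∃ x' ∈ S, f x' = f x := ⟨x, hx, rfl⟩
    simp only [he0, dif_pos hex']
    obtain ⟨hx', hFx'⟩ := hex'.choose_spec
    exact hfinj _ hx' _ hx hFx'
  set P0 : BF.PI α β := ⟨S, S.image f, f, e0, rfl, he0f, hbot, hsupS, hinfS, hsdiffS,
    hord, hfsup, hfinf, hfsdiff, hcells⟩ with hP0
  -- enumerations
  have : Nonempty α := ⟨⊥⟩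
  have : Nonempty β := ⟨⊥⟩
  obtain ⟨ea, hea⟩ := exists_surjective_nat α
  obtain ⟨eb, heb⟩ := exists_surjective_nat β
  -- the chain
  have hstep : ∀ (P : BF.PI α β) (n : ℕ), ∃ P' : BF.PI α β,
      P.S ⊆ P'.S ∧ (∀ x ∈ P.S, P'.f x = P.f x) ∧ ea n ∈ P'.S ∧ eb n ∈ P'.T := by
    intro P n
    obtain ⟨Q, h1, h2, h3⟩ := BF.forth hsplitβ hdisjβ P (ea n)
    obtain ⟨R, h4, h5, h6⟩ := BF.back hsplitα hdisjα Q (eb n)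
    exact ⟨R, h1.trans h4, fun x hx => (h5 x (h1 hx)).trans (h2 x hx), h4 h3, h6⟩
  choose step hstep1 hstep2 hstep3 hstep4 using hstep
  set Ch : ℕ → BF.PI α β := fun n => Nat.rec P0 (fun k Pk => step Pk k) n with hCh
  have hCh0 : Ch 0 = P0 := rfl
  have hChsucc : ∀ n, Ch (n + 1) = step (Ch n) n := fun n => rfl
  have mono : ∀ n m, n ≤ m →
      (Ch n).S ⊆ (Ch m).S ∧ ∀ x ∈ (Ch n).S, (Ch m).f x = (Ch n).f x := by
    intro n m hnm
    induction m, hnm using Nat.le_induction with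
    | base => exact ⟨Finset.Subset.refl _, fun x _ => rfl⟩
    | succ m hnm ih =>
        rw [hChsucc m]
        refine ⟨ih.1.trans (hstep1 (Ch m) m), fun x hx => ?_⟩
        rw [hstep2 (Ch m) m x (ih.1 hx), ih.2 x hx]
  have hNx : ∀ x : α, x ∈ (Ch ((hea x).choose + 1)).S := by
    intro x
    rw [hChsucc]
    have := hstep3 (Ch (hea x).choose) (hea x).choose
    rwa [(hea x).choose_spec] at this
  set g : α → β := fun x => (Ch ((hea x).choose + 1)).f x with hg
  have hgn : ∀ n, ∀ x ∈ (Ch n).S, g x = (Ch n).f x := by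
    intro n x hx
    set M := max n ((hea x).choose + 1) with hM
    have h1 := mono n M (le_max_left _ _)
    have h2 := mono ((hea x).choose + 1) M (le_max_right _ _)
    rw [hg]
    simp only
    rw [← h2.2 x (hNx x), h1.2 x hx]
  have horder : ∀ x y : α, x ≤ y ↔ g x ≤ g y := by
    intro x y
    set M := max ((hea x).choose + 1) ((hea y).choose + 1) with hM
    have hxM : x ∈ (Ch M).S := (mono _ M (le_max_left _ _)).1 (hNx x)
    have hyM : y ∈ (Ch M).S := (mono _ M (le_max_right _ _)).1 (hNx y)
    rw [hgn M x hxM, hgn M y hyM]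
    exact (Ch M).hord x hxM y hyM
  have hsurj : Function.Surjective g := by
    intro b
    have hb : b ∈ (Ch ((heb b).choose + 1)).T := by
      rw [hChsucc]
      have := hstep4 (Ch (heb b).choose) (heb b).choose
      rwa [(heb b).choose_spec] at this
    rw [(Ch ((heb b).choose + 1)).hT, Finset.mem_image] at hb
    obtain ⟨x, hx, hfx⟩ := hb
    exact ⟨x, (hgn ((heb b).choose + 1) x hx).trans hfx⟩
  have hinj : Function.Injective g := by
    intro x y h
    exact le_antisymm ((horder x y).mpr h.le) ((horder y x).mpr h.ge)
  refine ⟨⟨Equiv.ofBijective g ⟨hinj, hsurj⟩, ?_⟩, ?_⟩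
  · intro x y
    exact (horder x y).symm
  · intro x hx
    have : g x = (Ch 0).f x := hgn 0 x (by rw [hCh0]; exact hx)
    rw [hCh0] at this
    exact this
end

section
/- If a countable first-order structure M is ω-saturated, then any two countable ω-saturated models of the same complete theory are isomorphic (uniqueness of the countable ω-saturated model). -/
open FirstOrder

/-- A structure is ω-saturated if every type over finitely many parameters that is
finitely realized in the structure is realized in the structure. -/
def OmegaSaturated (L : FirstOrder.Language) (M : Type*) [L.Structure M] : Prop :=
  ∀ (n : ℕ) (v : Fin n → M) (T : Set (L.Formula (Fin n ⊕ Fin 1))),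
    (∀ T₀ : Finset (L.Formula (Fin n ⊕ Fin 1)), ↑T₀ ⊆ T →
      ∃ x : M, ∀ φ ∈ T₀, φ.Realize (Sum.elim v (fun _ => x))) →
    ∃ x : M, ∀ φ ∈ T, φ.Realize (Sum.elim v (fun _ => x))

namespace Stmt18Aux

open FirstOrder Language

/-- Elementary compatibility of two finite tuples. -/
def Compat (L : Language) {M : Type*} {N : Type*} [L.Structure M] [L.Structure N]
    (n : ℕ) (a : Fin n → M) (b : Fin n → N) : Prop :=
  ∀ φ : L.Formula (Fin n), φ.Realize a ↔ φ.Realize b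

variable {L : Language} {M : Type*} {N : Type*} [L.Structure M] [L.Structure N]

lemma Compat.symm {n : ℕ} {a : Fin n → M} {b : Fin n → N} (h : Compat L n a b) :
    Compat L n b a := fun φ => (h φ).symm

lemma Compat.comp {n k : ℕ} {a : Fin n → M} {b : Fin n → N} (h : Compat L n a b)
    (g : Fin k → Fin n) : Compat L k (a ∘ g) (b ∘ g) := by
  intro φ
  have := h (φ.relabel g)
  simpa [Formula.realize_relabel] using this

lemma compat_zero (hMN : L.ElementarilyEquivalent M N) (a : Fin 0 → M) (b : Fin 0 → N) :
    Compat L 0 a b := by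
  intro φ
  have h := (Language.elementarilyEquivalent_iff.1 hMN) (φ.relabel finZeroElim)
  simp only [Sentence.Realize, Formula.realize_relabel] at h
  have ha : (default : Empty → M) ∘ finZeroElim = a := funext fun i => i.elim0
  have hb : (default : Empty → N) ∘ finZeroElim = b := funext fun i => i.elim0
  rwa [ha, hb] at h

lemma compat_extend (hN : OmegaSaturated L N) {n : ℕ} {a : Fin n → M} {b : Fin n → N}
    (h : Compat L n a b) (x : M) :
    ∃ y : N, ∀ φ : L.Formula (Fin n ⊕ Fin 1),
      φ.Realize (Sum.elim a fun _ => x) ↔ φ.Realize (Sum.elim b fun _ => y) := by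
  have hfin : ∀ T₀ : Finset (L.Formula (Fin n ⊕ Fin 1)),
      ↑T₀ ⊆ {φ : L.Formula (Fin n ⊕ Fin 1) | φ.Realize (Sum.elim a fun _ => x)} →
      ∃ y : N, ∀ φ ∈ T₀, φ.Realize (Sum.elim b fun _ => y) := by
    intro T₀ hT₀
    set ψ : L.Formula (Fin n ⊕ Fin 1) := BoundedFormula.iInf (fun φ : T₀ => φ.1) with hψ
    have hψM : ψ.Realize (Sum.elim a fun _ => x) := by
      rw [hψ]
      refine BoundedFormula.realize_iInf.2 ?_
      intro φ
      exact hT₀ φ.2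
    have hexM : (ψ.iExs (Fin 1)).Realize a := by
      rw [Formula.realize_iExs]
      exact ⟨fun _ => x, hψM⟩
    have hexN := (h (ψ.iExs (Fin 1))).1 hexM
    rw [Formula.realize_iExs] at hexN
    obtain ⟨i, hi⟩ := hexN
    refine ⟨i 0, fun φ hφ => ?_⟩
    have hi' : ψ.Realize (Sum.elim b fun _ => i 0) := by
      have : (fun q : Fin n ⊕ Fin 1 => Sum.elim b i (id q)) = Sum.elim b fun _ => i 0 := by
        funext q
        cases q with
        | inl q => rfl
        | inr q => simp [Subsingleton.elim q 0]
      have e : Sum.elim b i = Sum.elim b fun _ => i 0 := this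
      rwa [e] at hi
    exact BoundedFormula.realize_iInf.1 hi' ⟨φ, hφ⟩
  obtain ⟨y, hy⟩ := hN n b {φ | φ.Realize (Sum.elim a fun _ => x)} hfin
  refine ⟨y, fun φ => ⟨fun hφ => hy φ hφ, fun hφ => ?_⟩⟩
  by_contra hx
  have hmem : φ.not ∈ {φ : L.Formula (Fin n ⊕ Fin 1) |
      φ.Realize (Sum.elim a fun _ => x)} := by
    simpa [Set.mem_setOf_eq, Formula.realize_not] using hx
  exact (Formula.realize_not.1 (hy φ.not hmem)) hφ

lemma elim_comp_symm {α : Type*} {n : ℕ} (a : Fin n → α) (x : α) :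
    (Sum.elim a fun _ : Fin 1 => x) ∘ ⇑(finSumFinEquiv (m := n) (n := 1)).symm
      = Fin.snoc a x := by
  funext j
  refine Fin.lastCases ?_ ?_ j
  · have : (finSumFinEquiv (m := n) (n := 1)).symm (Fin.last n) = Sum.inr 0 := by
      rw [Equiv.symm_apply_eq]
      ext
      simp [finSumFinEquiv]
    simp [Function.comp_apply, this]
  · intro i
    have : (finSumFinEquiv (m := n) (n := 1)).symm i.castSucc = Sum.inl i := by
      rw [Equiv.symm_apply_eq]
      ext
      simp [finSumFinEquiv, Fin.castAdd]
    simp [Function.comp_apply, this]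

lemma compat_snoc_right (hN : OmegaSaturated L N) {n : ℕ} {a : Fin n → M} {b : Fin n → N}
    (h : Compat L n a b) (x : M) :
    ∃ y : N, Compat L (n + 1) (Fin.snoc a x) (Fin.snoc b y) := by
  obtain ⟨y, hy⟩ := compat_extend hN h x
  refine ⟨y, fun φ => ?_⟩
  have := hy (φ.relabel ⇑(finSumFinEquiv (m := n) (n := 1)).symm)
  simpa only [Formula.realize_relabel, elim_comp_symm] using this

lemma compat_snoc_left (hM : OmegaSaturated L M) {n : ℕ} {a : Fin n → M} {b : Fin n → N}
    (h : Compat L n a b) (y : N) :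
    ∃ x : M, Compat L (n + 1) (Fin.snoc a x) (Fin.snoc b y) := by
  obtain ⟨x, hx⟩ := compat_snoc_right hM h.symm y
  exact ⟨x, hx.symm⟩

variable (hM : OmegaSaturated L M) (hN : OmegaSaturated L N)
  (hMN : L.ElementarilyEquivalent M N) (eM : ℕ → M) (eN : ℕ → N)

/-- One back-and-forth step. -/
noncomputable def step (n : ℕ)
    (s : {p : (Fin n → M) × (Fin n → N) // Compat L n p.1 p.2}) :
    {p : (Fin (n + 1) → M) × (Fin (n + 1) → N) // Compat L (n + 1) p.1 p.2} :=
  if hpar : n % 2 = 0 then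
    ⟨(Fin.snoc s.1.1 (eM (n / 2)),
      Fin.snoc s.1.2 (Classical.choose (compat_snoc_right hN s.2 (eM (n / 2))))),
      Classical.choose_spec (compat_snoc_right hN s.2 (eM (n / 2)))⟩
  else
    ⟨(Fin.snoc s.1.1 (Classical.choose (compat_snoc_left hM s.2 (eN (n / 2)))),
      Fin.snoc s.1.2 (eN (n / 2))),
      Classical.choose_spec (compat_snoc_left hM s.2 (eN (n / 2)))⟩

/-- The back-and-forth sequence. -/
noncomputable def seq : ∀ n : ℕ, {p : (Fin n → M) × (Fin n → N) // Compat L n p.1 p.2}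
  | 0 => ⟨(finZeroElim, finZeroElim), compat_zero hMN _ _⟩
  | n + 1 => step hM hN eM eN n (seq n)

lemma step_fst_castSucc (n : ℕ) (s : {p : (Fin n → M) × (Fin n → N) // Compat L n p.1 p.2})
    (i : Fin n) : (step hM hN eM eN n s).1.1 i.castSucc = s.1.1 i := by
  unfold step
  split <;> simp

lemma step_snd_castSucc (n : ℕ) (s : {p : (Fin n → M) × (Fin n → N) // Compat L n p.1 p.2})
    (i : Fin n) : (step hM hN eM eN n s).1.2 i.castSucc = s.1.2 i := by
  unfold step
  split <;> simp

lemma step_fst_last (n : ℕ) (s : {p : (Fin n → M) × (Fin n → N) // Compat L n p.1 p.2})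
    (hpar : n % 2 = 0) : (step hM hN eM eN n s).1.1 (Fin.last n) = eM (n / 2) := by
  unfold step
  rw [dif_pos hpar]
  simp

lemma step_snd_last (n : ℕ) (s : {p : (Fin n → M) × (Fin n → N) // Compat L n p.1 p.2})
    (hpar : ¬ n % 2 = 0) : (step hM hN eM eN n s).1.2 (Fin.last n) = eN (n / 2) := by
  unfold step
  rw [dif_neg hpar]
  simp

/-- The `M`-side enumeration built by back-and-forth. -/
noncomputable def A (n : ℕ) : M := (seq hM hN hMN eM eN (n + 1)).1.1 (Fin.last n)

/-- The `N`-side enumeration built by back-and-forth. -/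
noncomputable def B (n : ℕ) : N := (seq hM hN hMN eM eN (n + 1)).1.2 (Fin.last n)

lemma seq_fst (k n : ℕ) (h : n < k) :
    (seq hM hN hMN eM eN k).1.1 ⟨n, h⟩ = A hM hN hMN eM eN n := by
  induction k with
  | zero => omega
  | succ k ih =>
    rcases Nat.lt_succ_iff_lt_or_eq.1 h with h' | rfl
    · have heq : (⟨n, h⟩ : Fin (k + 1)) = (⟨n, h'⟩ : Fin k).castSucc := rfl
      rw [show seq hM hN hMN eM eN (k + 1) = step hM hN eM eN k (seq hM hN hMN eM eN k) from rfl,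
        heq, step_fst_castSucc, ih]
    · rfl

lemma seq_snd (k n : ℕ) (h : n < k) :
    (seq hM hN hMN eM eN k).1.2 ⟨n, h⟩ = B hM hN hMN eM eN n := by
  induction k with
  | zero => omega
  | succ k ih =>
    rcases Nat.lt_succ_iff_lt_or_eq.1 h with h' | rfl
    · have heq : (⟨n, h⟩ : Fin (k + 1)) = (⟨n, h'⟩ : Fin k).castSucc := rfl
      rw [show seq hM hN hMN eM eN (k + 1) = step hM hN eM eN k (seq hM hN hMN eM eN k) from rfl,
        heq, step_snd_castSucc, ih]
    · rfl

lemma A_two_mul (m : ℕ) : A hM hN hMN eM eN (2 * m) = eM m := by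
  have h1 : (2 * m) % 2 = 0 := by omega
  have h2 : (2 * m) / 2 = m := by omega
  have := step_fst_last hM hN eM eN (2 * m) (seq hM hN hMN eM eN (2 * m)) h1
  rw [h2] at this
  exact this

lemma B_two_mul_add_one (m : ℕ) : B hM hN hMN eM eN (2 * m + 1) = eN m := by
  have h1 : ¬ (2 * m + 1) % 2 = 0 := by omega
  have h2 : (2 * m + 1) / 2 = m := by omega
  have := step_snd_last hM hN eM eN (2 * m + 1) (seq hM hN hMN eM eN (2 * m + 1)) h1
  rw [h2] at this
  exact this

lemma master (n : ℕ) (g : Fin n → ℕ) :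
    Compat L n (A hM hN hMN eM eN ∘ g) (B hM hN hMN eM eN ∘ g) := by
  classical
  set k := (Finset.univ.sup g) + 1 with hk
  have hg : ∀ i, g i < k := fun i =>
    Nat.lt_succ_of_le (Finset.le_sup (Finset.mem_univ i))
  have h := (seq hM hN hMN eM eN k).2.comp (fun i => (⟨g i, hg i⟩ : Fin k))
  have e1 : ((seq hM hN hMN eM eN k).1.1 ∘ fun i => (⟨g i, hg i⟩ : Fin k))
      = A hM hN hMN eM eN ∘ g := funext fun i => seq_fst hM hN hMN eM eN k (g i) (hg i)
  have e2 : ((seq hM hN hMN eM eN k).1.2 ∘ fun i => (⟨g i, hg i⟩ : Fin k))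
      = B hM hN hMN eM eN ∘ g := funext fun i => seq_snd hM hN hMN eM eN k (g i) (hg i)
  rwa [e1, e2] at h

end Stmt18Aux

open Stmt18Aux FirstOrder.Language in
/-- Uniqueness of the countable ω-saturated model: two countable, elementarily
equivalent, ω-saturated structures in a countable language are isomorphic. -/
theorem stmt18 (L : FirstOrder.Language) [Countable L.Symbols]
    (M N : Type*) [L.Structure M] [L.Structure N] [Countable M] [Countable N]
    (hMN : L.ElementarilyEquivalent M N)
    (hM : OmegaSaturated L M) (hN : OmegaSaturated L N) :
    Nonempty (M ≃[L] N) := by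
  classical
  by_cases hE : Nonempty M
  · -- nonempty case: back-and-forth
    have hEN : Nonempty N := by
      by_contra hN'
      have hM' : ∃ x : M, True := ⟨Classical.choice hE, trivial⟩
      -- transfer nonemptiness via elementary equivalence
      have h := (Language.elementarilyEquivalent_iff.1 hMN)
        (BoundedFormula.ex (⊤ : L.BoundedFormula Empty 1))
      have hMs : M ⊨ BoundedFormula.ex (⊤ : L.BoundedFormula Empty 1) := by
        rw [Sentence.Realize, Formula.Realize, BoundedFormula.realize_ex]
        exact ⟨Classical.choice hE, BoundedFormula.realize_top.2 trivial⟩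
      have hNs := h.1 hMs
      rw [Sentence.Realize, Formula.Realize, BoundedFormula.realize_ex] at hNs
      obtain ⟨y, -⟩ := hNs
      exact hN' ⟨y⟩
    obtain ⟨eM, heM⟩ := exists_surjective_nat M
    obtain ⟨eN, heN⟩ := exists_surjective_nat N
    set A' := A hM hN hMN eM eN with hA'
    set B' := B hM hN hMN eM eN with hB'
    have master' := master hM hN hMN eM eN
    -- surjectivity of the enumerations
    have hAsurj : ∀ m : M, ∃ k, A' k = m := by
      intro m
      obtain ⟨j, rfl⟩ := heM m
      exact ⟨2 * j, A_two_mul hM hN hMN eM eN j⟩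
    have hBsurj : ∀ y : N, ∃ k, B' k = y := by
      intro y
      obtain ⟨j, rfl⟩ := heN y
      exact ⟨2 * j + 1, B_two_mul_add_one hM hN hMN eM eN j⟩
    -- equality transfer
    have heq : ∀ i j : ℕ, A' i = A' j ↔ B' i = B' j := by
      intro i j
      have := master' 2 ![i, j]
        (FirstOrder.Language.Term.equal (FirstOrder.Language.Term.var 0)
          (FirstOrder.Language.Term.var 1))
      simpa [Formula.realize_equal, Term.realize, Function.comp_def] using this
    -- function transfer
    have hfn : ∀ (l : ℕ) (f : L.Functions l) (g : Fin l → ℕ) (j : ℕ),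
        Structure.funMap f (A' ∘ g) = A' j → Structure.funMap f (B' ∘ g) = B' j := by
      intro l f g j hAj
      have hiff := master' (l + 1) (Fin.snoc g j)
        (FirstOrder.Language.Term.equal
          (FirstOrder.Language.Term.func f fun i => FirstOrder.Language.Term.var i.castSucc)
          (FirstOrder.Language.Term.var (Fin.last l)))
      rw [Formula.realize_equal, Formula.realize_equal] at hiff
      have e1 : Term.realize (A' ∘ Fin.snoc g j)
          (FirstOrder.Language.Term.func f fun i : Fin l =>
            FirstOrder.Language.Term.var i.castSucc) = Structure.funMap f (A' ∘ g) := by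
        rw [Term.realize_func]
        congr 1
        funext i
        simp [Term.realize_var, Function.comp_apply]
      have e2 : Term.realize (A' ∘ Fin.snoc g j)
          (FirstOrder.Language.Term.var (Fin.last l) : L.Term (Fin (l + 1))) = A' j := by
        simp [Term.realize_var, Function.comp_apply]
      have e3 : Term.realize (B' ∘ Fin.snoc g j)
          (FirstOrder.Language.Term.func f fun i : Fin l =>
            FirstOrder.Language.Term.var i.castSucc) = Structure.funMap f (B' ∘ g) := by
        rw [Term.realize_func]
        congr 1
        funext i
        simp [Term.realize_var, Function.comp_apply]
      have e4 : Term.realize (B' ∘ Fin.snoc g j)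
          (FirstOrder.Language.Term.var (Fin.last l) : L.Term (Fin (l + 1))) = B' j := by
        simp [Term.realize_var, Function.comp_apply]
      rw [e1, e2, e3, e4] at hiff
      exact hiff.1 hAj
    -- relation transfer
    have hrl : ∀ (l : ℕ) (r : L.Relations l) (g : Fin l → ℕ),
        Structure.RelMap r (A' ∘ g) ↔ Structure.RelMap r (B' ∘ g) := by
      intro l r g
      have := master' l g (r.formula fun i => FirstOrder.Language.Term.var i)
      simpa [Formula.realize_rel, Term.realize, Function.comp_def] using this
    -- the isomorphism
    set F : M → N := fun m => B' (Classical.choose (hAsurj m)) with hF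
    have hFA : ∀ k, F (A' k) = B' k := by
      intro k
      exact (heq _ k).1 (Classical.choose_spec (hAsurj (A' k)))
    have hFinj : Function.Injective F := by
      intro m₁ m₂ h
      obtain ⟨i, rfl⟩ := hAsurj m₁
      obtain ⟨j, rfl⟩ := hAsurj m₂
      rw [hFA, hFA] at h
      exact (heq i j).2 h
    have hFsurj : Function.Surjective F := by
      intro y
      obtain ⟨j, rfl⟩ := hBsurj y
      exact ⟨A' j, hFA j⟩
    refine ⟨{ toEquiv := Equiv.ofBijective F ⟨hFinj, hFsurj⟩, map_fun' := ?_, map_rel' := ?_ }⟩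
    · intro l f xs
      show F (Structure.funMap f xs) = Structure.funMap f (F ∘ xs)
      obtain ⟨g, hg⟩ : ∃ g : Fin l → ℕ, A' ∘ g = xs := by
        refine ⟨fun i => Classical.choose (hAsurj (xs i)), funext fun i => ?_⟩
        exact Classical.choose_spec (hAsurj (xs i))
      obtain ⟨j, hj⟩ := hAsurj (Structure.funMap f xs)
      have h1 : Structure.funMap f (A' ∘ g) = A' j := by rw [hg, hj]
      have h2 := hfn l f g j h1
      have h3 : B' ∘ g = F ∘ xs := by
        funext i
        show B' (g i) = F (xs i)
        rw [← congrFun hg i]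
        exact (hFA (g i)).symm
      rw [← h3, h2, ← hj]
      exact hFA j
    · intro l r xs
      show Structure.RelMap r (F ∘ xs) ↔ Structure.RelMap r xs
      obtain ⟨g, hg⟩ : ∃ g : Fin l → ℕ, A' ∘ g = xs := by
        refine ⟨fun i => Classical.choose (hAsurj (xs i)), funext fun i => ?_⟩
        exact Classical.choose_spec (hAsurj (xs i))
      have h3 : B' ∘ g = F ∘ xs := by
        funext i
        show B' (g i) = F (xs i)
        rw [← congrFun hg i]
        exact (hFA (g i)).symm
      rw [← h3, ← hg]
      exact (hrl l r g).symm
  · -- empty case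
    have hEM : IsEmpty M := not_nonempty_iff.1 hE
    have hEN : IsEmpty N := by
      by_contra hN'
      have hNne : Nonempty N := not_isEmpty_iff.1 hN'
      have h := (Language.elementarilyEquivalent_iff.1 hMN)
        (BoundedFormula.ex (⊤ : L.BoundedFormula Empty 1))
      have hNs : N ⊨ BoundedFormula.ex (⊤ : L.BoundedFormula Empty 1) := by
        rw [Sentence.Realize, Formula.Realize, BoundedFormula.realize_ex]
        exact ⟨Classical.choice hNne, BoundedFormula.realize_top.2 trivial⟩
      have hMs := h.2 hNs
      rw [Sentence.Realize, Formula.Realize, BoundedFormula.realize_ex] at hMs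
      obtain ⟨x, -⟩ := hMs
      exact hE ⟨x⟩
    refine ⟨{ toEquiv := Equiv.equivOfIsEmpty M N, map_fun' := ?_, map_rel' := ?_ }⟩
    · intro l f x
      exact (hEM.false (Structure.funMap f x)).elim
    · intro l r x
      match l with
      | 0 =>
        have h0 := compat_zero hMN (finZeroElim : Fin 0 → M) (finZeroElim : Fin 0 → N)
          (Relations.formula r (finZeroElim : Fin 0 → L.Term (Fin 0)))
        simp only [Formula.realize_rel] at h0
        have key : ∀ (v : Fin 0 → M) (w : Fin 0 → N),
            (Structure.RelMap r v ↔ Structure.RelMap r w) := by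
          intro v w
          have e1 : v = fun i : Fin 0 =>
              Term.realize (finZeroElim : Fin 0 → M) ((finZeroElim : Fin 0 → L.Term (Fin 0)) i) :=
            funext fun i => i.elim0
          have e2 : w = fun i : Fin 0 =>
              Term.realize (finZeroElim : Fin 0 → N) ((finZeroElim : Fin 0 → L.Term (Fin 0)) i) :=
            funext fun i => i.elim0
          rw [e1, e2]
          exact h0
        exact (key x ((Equiv.equivOfIsEmpty M N).toFun ∘ x)).symm
      | l + 1 =>
        exact (hEM.false (x 0)).elim
end
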